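/- arXiv:1310.2424 — 2 statements merged into one kernel-verified Lean document; each statement's English description precedes it below -/
import Mathlib

section
/- When Π is the partition of V into |V| singletons, the partition weight w^Π(G,T) coincides with the symmetric weight w_s(G,T), i.e., the fraction of total edge-orderings σ of G for which T is the Kruskal leading tree T(σ): ∑_{σ : T(σ)=T} 1/|E(G)|! = ∑_{τ orderings of T} ∏_{p=0}^{|V|−2} 1/k_p(T_τ). -/
open scoped Classical
open MeasureTheory

/-- A multigraph on vertex type `V` with edge type `E`: each edge has an
unordered pair of endpoints (self-loops and multiple edges allowed). -/
structure Multigraph (V E : Type) where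
  ends : E → Sym2 V

namespace Multigraph

variable {V E : Type}

/-- Two vertices are connected using only edges in the subset `S`. -/
def Connects (G : Multigraph V E) (S : Finset E) (v w : V) : Prop :=
  Relation.ReflTransGen (fun a b => ∃ e ∈ S, G.ends e = s(a, b)) v w

/-- The multigraph is connected. -/
def IsConnected (G : Multigraph V E) [Fintype E] : Prop :=
  ∀ v w : V, G.Connects Finset.univ v w

/-- A spanning tree: a spanning connected edge subset with `|V| - 1` edges. -/
def IsSpanningTree (G : Multigraph V E) [Fintype V] [Fintype E] (T : Finset E) : Prop :=
  (∀ v w : V, G.Connects T v w) ∧ T.card = Fintype.card V - 1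

/-- Kruskal's greedy algorithm: process the edges in increasing order of the
Hepp sector `σ`, inserting an edge iff it does not create a cycle (i.e. iff
its endpoints are not yet connected by the edges selected so far). -/
noncomputable def kruskal (G : Multigraph V E) [Fintype E]
    (σ : E ≃ Fin (Fintype.card E)) : Finset E :=
  ((List.finRange (Fintype.card E)).map σ.symm).foldl
    (fun S e => if ∀ a b, G.ends e = s(a, b) → ¬ G.Connects S a b then insert e S else S) ∅

/-- The symmetric weight `w_s(G,T)`: the fraction of Hepp sectors for which
`T` is the Kruskal leading tree. -/
noncomputable def ws (G : Multigraph V E) [Fintype V] [Fintype E] (T : Finset E) : ℚ :=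
  (Fintype.card {σ : E ≃ Fin (Fintype.card E) // G.kruskal σ = T} : ℚ) /
    (Nat.factorial (Fintype.card E) : ℚ)

/-- Updating the merge relation (which vertices have been identified) after
contracting the edge `e`: the equivalence closure of `M` together with the
pair of endpoints of `e`. -/
def mergeStep (G : Multigraph V E) (M : V → V → Prop) (e : E) : V → V → Prop :=
  Relation.EqvGen (fun a b => M a b ∨ G.ends e = s(a, b))

/-- Updating the block (partition) relation after contracting the trans-block
edge `e`: the new merged vertex forms a singleton block, the endpoints of `e`
are removed from their old blocks, and all other blocks are unchanged. -/
def blockStep (G : Multigraph V E) (M B : V → V → Prop) (e : E) : V → V → Prop :=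
  fun x y => ∀ a b, G.ends e = s(a, b) →
    ((G.mergeStep M e x a ∧ G.mergeStep M e y a) ∨
      (B x y ∧ ¬ G.mergeStep M e x a ∧ ¬ G.mergeStep M e y a))

/-- One contraction step on the pair (merge relation, block relation). -/
def stepPair (G : Multigraph V E) (s : (V → V → Prop) × (V → V → Prop)) (e : E) :
    (V → V → Prop) × (V → V → Prop) :=
  (G.mergeStep s.1 e, G.blockStep s.1 s.2 e)

/-- The state (merge relation, block relation) after contracting, in order,
the edges of the list `L`, starting from the discrete merge relation `Eq` and
initial block (partition) relation `B0`. -/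
def state (G : Multigraph V E) (B0 : V → V → Prop) (L : List E) :
    (V → V → Prop) × (V → V → Prop) :=
  L.foldl G.stepPair (Eq, B0)

/-- An edge is trans-block for the block relation `B` if its endpoints lie in
distinct blocks (in particular it is not a self-loop, even after merging). -/
def TransBlock (G : Multigraph V E) (B : V → V → Prop) (e : E) : Prop :=
  ∀ a b, G.ends e = s(a, b) → ¬ B a b

/-- The ordered list of edges `L` is a trans-block ordered forest for the
initial partition `B0`: each successive edge is trans-block for the
successively contracted partition. -/
def IsTransBlockSeq (G : Multigraph V E) (B0 : V → V → Prop) (L : List E) : Prop :=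
  ∀ p (h : p < L.length), G.TransBlock (G.state B0 (L.take p)).2 (L.get ⟨p, h⟩)

/-- `k_p`: the number of trans-block edges of the `p`-th contracted graph for
the `p`-th contracted partition (already-contracted edges are self-loops of
the contracted graph, hence never trans-block). -/
noncomputable def kcount (G : Multigraph V E) [Fintype E] (B0 : V → V → Prop)
    (L : List E) (p : ℕ) : ℕ :=
  (Finset.univ.filter fun e => G.TransBlock (G.state B0 (L.take p)).2 e).card

/-- First contact index `i(v,v')`: smallest `p` such that `v, v'` lie in
different blocks of `Π_p` (with the convention `i(v,v) = -1, j(v,v) = 0`,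
realized here by taking `i(v,v) = j(v,v) = 0`, which makes the corresponding
products empty, as in the convention `X_{v,v} = 1`). -/
noncomputable def iIdx (G : Multigraph V E) (B0 : V → V → Prop) (L : List E)
    (v v' : V) : ℕ :=
  if v = v' then 0 else sInf {p | ¬ (G.state B0 (L.take p)).2 v v'}

/-- Second contact index `j(v,v')`: smallest `p` such that `v, v'` have been
merged into a single vertex of `G_p`. -/
noncomputable def jIdx (G : Multigraph V E) (B0 : V → V → Prop) (L : List E)
    (v v' : V) : ℕ :=
  sInf {p | (G.state B0 (L.take p)).1 v v'}

/-- Entry of the contact matrix: `X_{v,v'}(u) = ∏_{i(v,v') < k ≤ j(v,v')} u_k`,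
where the variable `u_k` (1 ≤ k ≤ |V|-1) is represented by `w ⟨k-1⟩`. -/
noncomputable def Xent (G : Multigraph V E) (B0 : V → V → Prop) (L : List E)
    (n : ℕ) (w : Fin n → ℝ) (v v' : V) : ℝ :=
  ∏ k : Fin n,
    if G.iIdx B0 L v v' ≤ (k : ℕ) ∧ (k : ℕ) < G.jIdx B0 L v v' then w k else 1

/-- Contact-matrix factor `X_{v(ℓ),v'(ℓ)}(u)` of a (loop) edge `ℓ`. -/
noncomputable def XentE (G : Multigraph V E) (B0 : V → V → Prop) (L : List E)
    (n : ℕ) (w : Fin n → ℝ) (e : E) : ℝ :=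
  ∏ k : Fin n,
    if (∀ a b, G.ends e = s(a, b) →
        (G.iIdx B0 L a b ≤ (k : ℕ) ∧ (k : ℕ) < G.jIdx B0 L a b)) then w k else 1

/-- Tree edge factor `Y_ℓ(u) = ∏_{i(v(ℓ),v'(ℓ)) < k < j(v(ℓ),v'(ℓ))} u_k`. -/
noncomputable def Yent (G : Multigraph V E) (B0 : V → V → Prop) (L : List E)
    (n : ℕ) (w : Fin n → ℝ) (e : E) : ℝ :=
  ∏ k : Fin n,
    if (∀ a b, G.ends e = s(a, b) →
        (G.iIdx B0 L a b ≤ (k : ℕ) ∧ (k : ℕ) + 1 < G.jIdx B0 L a b)) then w k else 1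

/-- The weight `∏_{p=0}^{|V|-2} 1/k_p` of a trans-block ordered tree, and `0`
for a non-admissible ordering. -/
noncomputable def wOrd (G : Multigraph V E) [Fintype V] [Fintype E]
    (B0 : V → V → Prop) (L : List E) : ℚ :=
  if G.IsTransBlockSeq B0 L then
    ∏ p ∈ Finset.range (Fintype.card V - 1), ((G.kcount B0 L p : ℚ))⁻¹
  else 0

/-- The partition tree weight `w^Π(G,T)`: the sum over all admissible
orderings `τ` of `T` of `∏_{p=0}^{|V|-2} 1/k_p(T_τ)`. -/
noncomputable def wPi (G : Multigraph V E) [Fintype V] [Fintype E]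
    (B0 : V → V → Prop) (T : Finset E) : ℚ :=
  ∑ τ : Fin T.card ≃ {e // e ∈ T}, G.wOrd B0 (List.ofFn fun i => ((τ i : E)))

end Multigraph

section Rel

variable {V : Type}

lemma reflTransGen_symm' {r : V → V → Prop} (hr : ∀ a b, r a b → r b a) {a b : V}
    (h : Relation.ReflTransGen r a b) : Relation.ReflTransGen r b a := by
  induction h with
  | refl => exact .refl
  | tail _ h2 ih => exact Relation.ReflTransGen.trans (.single (hr _ _ h2)) ih

lemma eqvGen_iff_reflTransGen {r : V → V → Prop} (hr : ∀ a b, r a b → r b a) {a b : V} :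
    Relation.EqvGen r a b ↔ Relation.ReflTransGen r a b := by
  constructor
  · intro h
    induction h with
    | rel a b h => exact .single h
    | refl => exact .refl
    | symm a b _ ih => exact reflTransGen_symm' hr ih
    | trans a b c _ _ ih1 ih2 => exact ih1.trans ih2
  · intro h
    induction h with
    | refl => exact .refl _
    | tail _ h2 ih => exact ih.trans _ _ _ (.rel _ _ h2)

lemma eqvGen_congr {r s : V → V → Prop} (h : ∀ a b, r a b ↔ s a b) :
    Relation.EqvGen r = Relation.EqvGen s := by
  funext a b
  exact propext ⟨Relation.EqvGen.mono (fun a b => (h a b).1) _ _,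
    Relation.EqvGen.mono (fun a b => (h a b).2) _ _⟩

lemma eqvGen_eqvGen {r : V → V → Prop} {a b : V} :
    Relation.EqvGen (Relation.EqvGen r) a b ↔ Relation.EqvGen r a b := by
  constructor
  · intro h
    induction h with
    | rel a b h => exact h
    | refl => exact .refl _
    | symm a b _ ih => exact ih.symm _ _
    | trans a b c _ _ ih1 ih2 => exact ih1.trans _ _ _ ih2
  · exact Relation.EqvGen.mono (fun a b h => Relation.EqvGen.rel _ _ h) _ _

lemma eqvGen_sup_eqvGen {r p : V → V → Prop} :
    Relation.EqvGen (fun u v => Relation.EqvGen r u v ∨ p u v)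
      = Relation.EqvGen (fun u v => r u v ∨ p u v) := by
  funext a b
  apply propext
  constructor
  · intro h
    induction h with
    | rel a b h =>
      rcases h with h | h
      · exact Relation.EqvGen.mono (fun a b h => Or.inl h) _ _ h
      · exact .rel _ _ (Or.inr h)
    | refl => exact .refl _
    | symm a b _ ih => exact ih.symm _ _
    | trans a b c _ _ ih1 ih2 => exact ih1.trans _ _ _ ih2
  · exact Relation.EqvGen.mono (fun a b (h : r a b ∨ p a b) => h.imp (fun h => Relation.EqvGen.rel _ _ h) id) _ _

/-- key characterization: extending an equivalence `M` by identifying `a` and `b`. -/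
lemma eqvGen_sup_pair {M : V → V → Prop} (hM : Equivalence M) {P : V → V → Prop} {a b : V}
    (hP : ∀ u v, P u v ↔ ((u = a ∧ v = b) ∨ (u = b ∧ v = a))) (x y : V) :
    Relation.EqvGen (fun u v => M u v ∨ P u v) x y ↔
      (M x y ∨ ((M x a ∨ M x b) ∧ (M y a ∨ M y b))) := by
  constructor
  · intro h
    induction h with
    | rel u v h =>
      rcases h with h | h
      · exact Or.inl h
      · rcases (hP u v).1 h with ⟨h1, h2⟩ | ⟨h1, h2⟩ <;> subst h1 <;> subst h2
        · exact Or.inr ⟨Or.inl (hM.refl _), Or.inr (hM.refl _)⟩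
        · exact Or.inr ⟨Or.inr (hM.refl _), Or.inl (hM.refl _)⟩
    | refl u => exact Or.inl (hM.refl _)
    | symm u v _ ih =>
      rcases ih with h | ⟨h1, h2⟩
      · exact Or.inl (hM.symm h)
      · exact Or.inr ⟨h2, h1⟩
    | trans u v w _ _ ih1 ih2 =>
      rcases ih1 with h | ⟨h1, h2⟩
      · rcases ih2 with h' | ⟨h1', h2'⟩
        · exact Or.inl (hM.trans h h')
        · refine Or.inr ⟨?_, h2'⟩
          rcases h1' with h' | h'
          · exact Or.inl (hM.trans h h')
          · exact Or.inr (hM.trans h h')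
      · rcases ih2 with h' | ⟨h1', h2'⟩
        · refine Or.inr ⟨h1, ?_⟩
          rcases h2 with h'' | h''
          · exact Or.inl (hM.trans (hM.symm h') h'')
          · exact Or.inr (hM.trans (hM.symm h') h'')
        · exact Or.inr ⟨h1, h2'⟩
  · intro h
    have hab : Relation.EqvGen (fun u v => M u v ∨ P u v) a b :=
      .rel _ _ (Or.inr ((hP a b).2 (Or.inl ⟨rfl, rfl⟩)))
    have liftM : ∀ u v, M u v → Relation.EqvGen (fun u v => M u v ∨ P u v) u v :=
      fun u v h => .rel _ _ (Or.inl h)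
    rcases h with h | ⟨h1, h2⟩
    · exact liftM _ _ h
    · have hxa : Relation.EqvGen (fun u v => M u v ∨ P u v) x a := by
        rcases h1 with h | h
        · exact liftM _ _ h
        · exact (liftM _ _ h).trans _ _ _ (hab.symm _ _)
      have hya : Relation.EqvGen (fun u v => M u v ∨ P u v) y a := by
        rcases h2 with h | h
        · exact liftM _ _ h
        · exact (liftM _ _ h).trans _ _ _ (hab.symm _ _)
      exact hxa.trans _ _ _ (hya.symm _ _)

/-- absorbing a pair already related by `EqvGen r`. -/
lemma eqvGen_sup_pair_absorb {r P : V → V → Prop} {a b : V}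
    (hP : ∀ u v, P u v ↔ ((u = a ∧ v = b) ∨ (u = b ∧ v = a)))
    (hab : Relation.EqvGen r a b) :
    Relation.EqvGen (fun u v => r u v ∨ P u v) = Relation.EqvGen r := by
  funext x y
  apply propext
  constructor
  · intro h
    induction h with
    | rel u v h =>
      rcases h with h | h
      · exact .rel _ _ h
      · rcases (hP u v).1 h with ⟨h1, h2⟩ | ⟨h1, h2⟩ <;> subst h1 <;> subst h2
        · exact hab
        · exact hab.symm _ _
    | refl u => exact .refl _
    | symm u v _ ih => exact ih.symm _ _
    | trans u v w _ _ ih1 ih2 => exact ih1.trans _ _ _ ih2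
  · exact Relation.EqvGen.mono (fun u v h => Or.inl h) _ _

lemma eq_eq_eqvGen_bot : (Eq : V → V → Prop) = Relation.EqvGen (fun _ _ => False) := by
  funext a b
  apply propext
  constructor
  · rintro rfl; exact .refl _
  · intro h
    induction h with
    | rel _ _ h => exact h.elim
    | refl => rfl
    | symm _ _ _ ih => exact ih.symm
    | trans _ _ _ _ _ ih1 ih2 => exact ih1.trans ih2


lemma eqvGen_mono' {r s : V → V → Prop} (h : ∀ a b, r a b → Relation.EqvGen s a b) {a b : V}
    (hr : Relation.EqvGen r a b) : Relation.EqvGen s a b :=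
  eqvGen_eqvGen.1 (Relation.EqvGen.mono h _ _ hr)
end Rel

namespace Multigraph

variable {V E : Type}

-- ===== Section 2 : merge relation =====
variable (G : Multigraph V E)

/-- the merge relation generated by the edges satisfying `P`. -/
def mrel (P : E → Prop) : V → V → Prop :=
  Relation.EqvGen (fun u v => ∃ e, P e ∧ G.ends e = s(u, v))

lemma ends_exists (e : E) : ∃ a b, G.ends e = s(a, b) :=
  (G.ends e).ind (fun a b => ⟨a, b, rfl⟩)

lemma mrel_equivalence (P : E → Prop) : Equivalence (G.mrel P) :=
  Relation.EqvGen.is_equivalence _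

lemma mrel_congr {P Q : E → Prop} (h : ∀ e, P e ↔ Q e) : G.mrel P = G.mrel Q :=
  eqvGen_congr (fun a b => exists_congr fun e => and_congr_left' (h e))

lemma mrel_mono {P Q : E → Prop} (h : ∀ e, P e → Q e) {a b : V} (hab : G.mrel P a b) :
    G.mrel Q a b :=
  Relation.EqvGen.mono (fun u v (hh : ∃ e, P e ∧ G.ends e = s(u, v)) =>
    (hh.imp fun e he => ⟨h e he.1, he.2⟩ : ∃ e, Q e ∧ G.ends e = s(u, v))) _ _ hab

lemma mrel_of_ends {P : E → Prop} {e : E} (he : P e) {a b : V} (hab : G.ends e = s(a, b)) :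
    G.mrel P a b :=
  Relation.EqvGen.rel _ _ ⟨e, he, hab⟩

lemma connects_iff_mrel (S : Finset E) (a b : V) :
    G.Connects S a b ↔ G.mrel (· ∈ S) a b := by
  have hr : ∀ u v : V, (∃ e ∈ S, G.ends e = s(u, v)) → (∃ e ∈ S, G.ends e = s(v, u)) := by
    rintro u v ⟨e, he, h⟩
    exact ⟨e, he, h.trans Sym2.eq_swap⟩
  exact ⟨fun h => (eqvGen_iff_reflTransGen hr).2 h, fun h => (eqvGen_iff_reflTransGen hr).1 h⟩

lemma state_fst (B0 : V → V → Prop) (L : List E) :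
    (G.state B0 L).1 = L.foldl G.mergeStep Eq := by
  suffices h : ∀ (L : List E) (M B : V → V → Prop),
      (L.foldl G.stepPair (M, B)).1 = L.foldl G.mergeStep M by
    exact h L Eq B0
  intro L
  induction L with
  | nil => intro M B; rfl
  | cons e L ih => intro M B; exact ih _ _

lemma mergeStep_eqvGen (r : V → V → Prop) (e : E) :
    G.mergeStep (Relation.EqvGen r) e
      = Relation.EqvGen (fun u v => r u v ∨ G.ends e = s(u, v)) :=
  eqvGen_sup_eqvGen

lemma foldl_mergeStep (L : List E) : ∀ (r : V → V → Prop),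
    L.foldl G.mergeStep (Relation.EqvGen r)
      = Relation.EqvGen (fun u v => r u v ∨ ∃ e ∈ L, G.ends e = s(u, v)) := by
  induction L with
  | nil =>
    intro r
    simp only [List.foldl_nil]
    exact eqvGen_congr (fun a b => by simp)
  | cons e L ih =>
    intro r
    simp only [List.foldl_cons, G.mergeStep_eqvGen r e]
    rw [ih]
    refine eqvGen_congr (fun a b => ?_)
    simp only [List.mem_cons]
    constructor
    · rintro ((h | h) | ⟨e', h1, h2⟩)
      · exact Or.inl h
      · exact Or.inr ⟨e, Or.inl rfl, h⟩
      · exact Or.inr ⟨e', Or.inr h1, h2⟩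
    · rintro (h | ⟨e', (h1 | h1), h2⟩)
      · exact Or.inl (Or.inl h)
      · subst h1; exact Or.inl (Or.inr h2)
      · exact Or.inr ⟨e', h1, h2⟩

lemma state_fst_eq_mrel (B0 : V → V → Prop) (L : List E) :
    (G.state B0 L).1 = G.mrel (· ∈ L) := by
  rw [G.state_fst]
  conv_lhs => rw [eq_eq_eqvGen_bot]
  rw [G.foldl_mergeStep]
  exact eqvGen_congr (fun a b => by simp)

lemma blockStep_eq {M : V → V → Prop} (hM : Equivalence M) (e : E) :
    G.blockStep M M e = G.mergeStep M e := by
  obtain ⟨a, b, hab⟩ := G.ends_exists e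
  have hP : ∀ u v : V, G.ends e = s(u, v) ↔ ((u = a ∧ v = b) ∨ (u = b ∧ v = a)) := by
    intro u v
    rw [hab, Sym2.eq_iff]
    constructor
    · rintro (⟨h1, h2⟩ | ⟨h1, h2⟩)
      · exact Or.inl ⟨h1.symm, h2.symm⟩
      · exact Or.inr ⟨h2.symm, h1.symm⟩
    · rintro (⟨h1, h2⟩ | ⟨h1, h2⟩)
      · exact Or.inl ⟨h1.symm, h2.symm⟩
      · exact Or.inr ⟨h2.symm, h1.symm⟩
  have hchar : ∀ x y : V, G.mergeStep M e x y ↔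
      (M x y ∨ ((M x a ∨ M x b) ∧ (M y a ∨ M y b))) := by
    intro x y
    exact eqvGen_sup_pair hM hP x y
  have hMeqv : Equivalence (G.mergeStep M e) := Relation.EqvGen.is_equivalence _
  have hMab : G.mergeStep M e a b := Relation.EqvGen.rel _ _ (Or.inr hab)
  have hliftM : ∀ x y, M x y → G.mergeStep M e x y := fun x y h =>
    Relation.EqvGen.rel _ _ (Or.inl h)
  funext x y
  apply propext
  constructor
  · intro h
    rcases h a b hab with ⟨h1, h2⟩ | ⟨h1, _, _⟩
    · exact hMeqv.trans h1 (hMeqv.symm h2)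
    · exact hliftM _ _ h1
  · intro h a' b' hab'
    by_cases hxa : G.mergeStep M e x a'
    · exact Or.inl ⟨hxa, hMeqv.trans (hMeqv.symm h) hxa⟩
    · have hMa'b' : G.mergeStep M e a' b' := Relation.EqvGen.rel _ _ (Or.inr hab')
      have hP' : ∀ u v : V, G.ends e = s(u, v) ↔ ((u = a' ∧ v = b') ∨ (u = b' ∧ v = a')) := by
        intro u v
        rw [hab', Sym2.eq_iff]
        constructor
        · rintro (⟨h1, h2⟩ | ⟨h1, h2⟩)
          · exact Or.inl ⟨h1.symm, h2.symm⟩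
          · exact Or.inr ⟨h2.symm, h1.symm⟩
        · rintro (⟨h1, h2⟩ | ⟨h1, h2⟩)
          · exact Or.inl ⟨h1.symm, h2.symm⟩
          · exact Or.inr ⟨h2.symm, h1.symm⟩
      have hxy : M x y := by
        rcases (eqvGen_sup_pair hM hP' x y).1 h with h' | ⟨h1', _⟩
        · exact h'
        · exfalso
          rcases h1' with h' | h'
          · exact hxa (hliftM _ _ h')
          · exact hxa (hMeqv.trans (hliftM _ _ h') (hMeqv.symm hMa'b'))
      refine Or.inr ⟨hxy, hxa, fun hya => hxa (hMeqv.trans h hya)⟩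
  
lemma state_snd_eq_fst (L : List E) : (G.state Eq L).2 = (G.state Eq L).1 := by
  suffices h : ∀ (L : List E) (M : V → V → Prop), Equivalence M →
      (L.foldl G.stepPair (M, M)).2 = (L.foldl G.stepPair (M, M)).1 by
    exact h L Eq eq_equivalence
  intro L
  induction L with
  | nil => intro M _; rfl
  | cons e L ih =>
    intro M hM
    have : G.stepPair (M, M) e = (G.mergeStep M e, G.mergeStep M e) := by
      show (G.mergeStep M e, G.blockStep M M e) = _
      rw [G.blockStep_eq hM]
    simp only [List.foldl_cons, this]
    exact ih _ (Relation.EqvGen.is_equivalence _)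

lemma state_snd_eq_mrel (L : List E) : (G.state Eq L).2 = G.mrel (· ∈ L) := by
  rw [G.state_snd_eq_fst, G.state_fst_eq_mrel]

-- ===== Section 3 : counting classes, tree facts =====

lemma ends_rep_iff {e : E} {a b : V} (hab : G.ends e = s(a, b)) (u v : V) :
    G.ends e = s(u, v) ↔ ((u = a ∧ v = b) ∨ (u = b ∧ v = a)) := by
  rw [hab, Sym2.eq_iff]
  constructor
  · rintro (⟨h1, h2⟩ | ⟨h1, h2⟩)
    · exact Or.inl ⟨h1.symm, h2.symm⟩
    · exact Or.inr ⟨h2.symm, h1.symm⟩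
  · rintro (⟨h1, h2⟩ | ⟨h1, h2⟩)
    · exact Or.inl ⟨h1.symm, h2.symm⟩
    · exact Or.inr ⟨h2.symm, h1.symm⟩

lemma mrel_snoc (L : List E) (e : E) :
    G.mrel (· ∈ L ++ [e])
      = Relation.EqvGen (fun u v => G.mrel (· ∈ L) u v ∨ G.ends e = s(u, v)) := by
  unfold mrel
  rw [eqvGen_sup_eqvGen]
  refine eqvGen_congr (fun u v => ?_)
  simp only [List.mem_append, List.mem_singleton]
  constructor
  · rintro ⟨e', (h1 | h1), h2⟩
    · exact Or.inl ⟨e', h1, h2⟩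
    · subst h1; exact Or.inr h2
  · rintro (⟨e', h1, h2⟩ | h)
    · exact ⟨e', Or.inl h1, h2⟩
    · exact ⟨e, Or.inr rfl, h⟩

lemma mrel_snoc_iff {L : List E} {e : E} {a b : V} (hab : G.ends e = s(a, b)) (x y : V) :
    G.mrel (· ∈ L ++ [e]) x y ↔
      (G.mrel (· ∈ L) x y ∨
        ((G.mrel (· ∈ L) x a ∨ G.mrel (· ∈ L) x b) ∧
          (G.mrel (· ∈ L) y a ∨ G.mrel (· ∈ L) y b))) := by
  rw [G.mrel_snoc]
  exact eqvGen_sup_pair (G.mrel_equivalence _) (G.ends_rep_iff hab) x y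

lemma eqvGen_mrel {P : E → Prop} {x y : V} :
    Relation.EqvGen (G.mrel P) x y ↔ G.mrel P x y := eqvGen_eqvGen

lemma card_le_quot [Fintype V] (L : List E) :
    Fintype.card V ≤ Nat.card (Quot (G.mrel (· ∈ L))) + L.length := by
  induction L using List.reverseRecOn with
  | nil =>
    have h : G.mrel (· ∈ ([] : List E)) = (Eq : V → V → Prop) := by
      conv_rhs => rw [eq_eq_eqvGen_bot]
      exact eqvGen_congr (fun a b => by simp)
    rw [h]
    have hinj : Function.Injective (Quot.mk (Eq : V → V → Prop)) := by
      intro x y hxy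
      have := Quot.eq.1 hxy
      clear hxy
      induction this with
      | rel _ _ h => exact h
      | refl => rfl
      | symm _ _ _ ih => exact ih.symm
      | trans _ _ _ _ _ ih1 ih2 => exact ih1.trans ih2
    have := Nat.card_le_card_of_injective _ hinj
    rw [Nat.card_eq_fintype_card] at this
    simpa using this
  | append_singleton L e ih =>
    obtain ⟨a, b, hab⟩ := G.ends_exists e
    set r := G.mrel (· ∈ L) with hr
    set r' := G.mrel (· ∈ L ++ [e]) with hr'
    have hre : Equivalence r := G.mrel_equivalence _
    have hmono : ∀ x y : V, r x y → r' x y := fun x y h =>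
      G.mrel_mono (fun e' (h' : e' ∈ L) => by simp [h']) h
    have key : Nat.card (Quot r) ≤ Nat.card (Quot r') + 1 := by
      letI : Fintype (Quot r) := Fintype.ofFinite _
      letI : Fintype (Quot r') := Fintype.ofFinite _
      have hcard := Finset.card_le_card_of_injOn (fun q => Quot.map id hmono q)
        (s := (Finset.univ.erase (Quot.mk r b))) (t := Finset.univ)
        (fun _ _ => Finset.mem_univ _) ?_
      · rw [Finset.card_erase_of_mem (Finset.mem_univ _), Finset.card_univ,
          Finset.card_univ] at hcard
        rw [Nat.card_eq_fintype_card, Nat.card_eq_fintype_card]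
        omega
      · intro q1 hq1 q2 hq2 hf
        obtain ⟨u, rfl⟩ := Quot.exists_rep q1
        obtain ⟨v, rfl⟩ := Quot.exists_rep q2
        simp only [Finset.coe_erase, Set.mem_diff, Set.mem_singleton_iff] at hq1 hq2
        have huv : r' u v := by
          have : Quot.mk r' u = Quot.mk r' v := hf
          have h2 := Quot.eq.1 this
          rw [hr'] at h2 ⊢
          exact (G.eqvGen_mrel).1 h2
        rw [hr'] at huv
        rw [G.mrel_snoc_iff hab] at huv
        rcases huv with h | ⟨h1, h2⟩
        · exact Quot.sound h
        · have hua : r u a := by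
            rcases h1 with h | h
            · exact h
            · exact absurd (Quot.sound h) hq1.2
          have hva : r v a := by
            rcases h2 with h | h
            · exact h
            · exact absurd (Quot.sound h) hq2.2
          exact Quot.sound (hre.trans hua (hre.symm hva))
    calc Fintype.card V ≤ Nat.card (Quot r) + L.length := ih
      _ ≤ (Nat.card (Quot r') + 1) + L.length := by omega
      _ = Nat.card (Quot r') + (L ++ [e]).length := by
          rw [List.length_append, List.length_singleton]; omega

lemma card_le_of_total [Fintype V] (L : List E) (h : ∀ v w : V, G.mrel (· ∈ L) v w) :
    Fintype.card V ≤ 1 + L.length := by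
  have h1 := G.card_le_quot L
  have h2 : Nat.card (Quot (G.mrel (· ∈ L))) ≤ 1 := by
    have hss : Subsingleton (Quot (G.mrel (· ∈ L))) := by
      constructor
      intro q1 q2
      obtain ⟨u, rfl⟩ := Quot.exists_rep q1
      obtain ⟨v, rfl⟩ := Quot.exists_rep q2
      exact Quot.sound (h u v)
    letI : Fintype (Quot (G.mrel (· ∈ L))) := Fintype.ofFinite _
    rw [Nat.card_eq_fintype_card]
    exact Fintype.card_le_one_iff_subsingleton.2 hss
  omega

/-- Key tree fact: an edge of a spanning tree is never a self-loop (even after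
contracting other tree edges): contracting any set of tree edges not containing
`e` never merges the endpoints of `e`. -/
lemma tree_transBlock [Fintype V] {T : Finset E}
    (htot : ∀ v w : V, G.mrel (· ∈ T) v w) (hcard : T.card = Fintype.card V - 1)
    {e : E} (he : e ∈ T) (P : E → Prop) (hP : ∀ e', P e' → e' ∈ T ∧ e' ≠ e)
    {a b : V} (hab : G.ends e = s(a, b)) : ¬ G.mrel P a b := by
  intro hcon
  -- endpoints of e connected using T.erase e
  have h1 : G.mrel (· ∈ T.erase e) a b := by
    refine G.mrel_mono (fun e' h' => ?_) hcon
    obtain ⟨h1, h2⟩ := hP e' h'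
    exact Finset.mem_erase.2 ⟨h2, h1⟩
  -- hence the whole graph is connected using T.erase e
  have h2 : ∀ v w : V, G.mrel (· ∈ T.erase e) v w := by
    intro v w
    have h3 : G.mrel (· ∈ T)
        = Relation.EqvGen (fun u v => G.mrel (· ∈ T.erase e) u v ∨ G.ends e = s(u, v)) := by
      unfold mrel
      rw [eqvGen_sup_eqvGen]
      refine eqvGen_congr (fun u v => ?_)
      constructor
      · rintro ⟨e', h1', h2'⟩
        by_cases he' : e' = e
        · subst he'; exact Or.inr h2'
        · exact Or.inl ⟨e', Finset.mem_erase.2 ⟨he', h1'⟩, h2'⟩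
      · rintro (⟨e', h1', h2'⟩ | h')
        · exact ⟨e', (Finset.mem_erase.1 h1').2, h2'⟩
        · exact ⟨e, he, h'⟩
    have h4 := htot v w
    rw [h3, eqvGen_sup_pair_absorb (r := G.mrel (· ∈ T.erase e)) (G.ends_rep_iff hab)
      ((G.eqvGen_mrel).2 h1)] at h4
    exact (G.eqvGen_mrel).1 h4
  -- transfer to the list of T.erase e, count
  have h5 : ∀ v w : V, G.mrel (· ∈ (T.erase e).toList) v w := by
    intro v w
    rw [G.mrel_congr (fun e' => (Finset.mem_toList (s := T.erase e)))]
    exact h2 v w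
  have h6 := G.card_le_of_total _ h5
  rw [Finset.length_toList, Finset.card_erase_of_mem he] at h6
  have h7 : 1 ≤ T.card := Finset.card_pos.2 ⟨e, he⟩
  have h8 : 2 ≤ Fintype.card V := by omega
  omega

end Multigraph


namespace Multigraph

variable {V E : Type} (G : Multigraph V E)

noncomputable def gstep (S : Finset E) (e : E) : Finset E :=
  if ∀ a b, G.ends e = s(a, b) → ¬ G.Connects S a b then insert e S else S

noncomputable def sel (L : List E) : Finset E := L.foldl G.gstep ∅

lemma kruskal_eq_sel [Fintype E] (σ : E ≃ Fin (Fintype.card E)) :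
    G.kruskal σ = G.sel ((List.finRange (Fintype.card E)).map σ.symm) := rfl

lemma sel_snoc (L : List E) (e : E) : G.sel (L ++ [e]) = G.gstep (G.sel L) e := by
  unfold sel
  rw [List.foldl_append]
  rfl

lemma gstep_subset (S : Finset E) (e : E) : S ⊆ G.gstep S e := by
  unfold gstep
  split <;> intro x hx
  · exact Finset.mem_insert_of_mem hx
  · exact hx

lemma gstep_subset' (S : Finset E) (e : E) : G.gstep S e ⊆ insert e S := by
  unfold gstep
  split <;> intro x hx
  · exact hx
  · exact Finset.mem_insert_of_mem hx

lemma mem_of_mem_sel {L : List E} {e' : E} (h : e' ∈ G.sel L) : e' ∈ L := by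
  induction L using List.reverseRecOn with
  | nil => simp [sel] at h
  | append_singleton L e ih =>
    rw [G.sel_snoc] at h
    rcases Finset.mem_insert.1 (G.gstep_subset' (G.sel L) e h) with h1 | h1
    · subst h1; simp
    · simp [ih h1]

lemma sel_prefix_subset (L L' : List E) : G.sel L ⊆ G.sel (L ++ L') := by
  induction L' using List.reverseRecOn with
  | nil => simp
  | append_singleton M e ih =>
    calc G.sel L ⊆ G.sel (L ++ M) := ih
      _ ⊆ G.gstep (G.sel (L ++ M)) e := G.gstep_subset _ _
      _ = G.sel (L ++ (M ++ [e])) := by rw [← List.append_assoc, G.sel_snoc]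

lemma eqvGen_mrel_eq (P : E → Prop) : Relation.EqvGen (G.mrel P) = G.mrel P :=
  funext fun _ => funext fun _ => propext eqvGen_eqvGen

lemma mrel_or (P : E → Prop) (e : E) :
    G.mrel (fun e' => P e' ∨ e' = e)
      = Relation.EqvGen (fun u v => G.mrel P u v ∨ G.ends e = s(u, v)) := by
  unfold mrel
  rw [eqvGen_sup_eqvGen]
  refine eqvGen_congr (fun u v => ?_)
  constructor
  · rintro ⟨e', (h1 | h1), h2⟩
    · exact Or.inl ⟨e', h1, h2⟩
    · subst h1; exact Or.inr h2
  · rintro (⟨e', h1, h2⟩ | h)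
    · exact ⟨e', Or.inl h1, h2⟩
    · exact ⟨e, Or.inr rfl, h⟩

lemma mrel_sel (L : List E) : G.mrel (· ∈ G.sel L) = G.mrel (· ∈ L) := by
  induction L using List.reverseRecOn with
  | nil => exact G.mrel_congr (fun e => by simp [sel])
  | append_singleton L e ih =>
    rw [G.sel_snoc]
    unfold gstep
    split
    case isTrue h =>
      have h1 : G.mrel (· ∈ insert e (G.sel L)) = G.mrel (fun e' => e' ∈ G.sel L ∨ e' = e) :=
        G.mrel_congr (fun e' => by
          simp only [Finset.mem_insert]
          tauto)
      rw [h1, G.mrel_or, ih, ← G.mrel_snoc]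
    case isFalse h =>
      push_neg at h
      obtain ⟨a, b, hab, hcon⟩ := h
      have h2 : G.mrel (· ∈ L) a b := by
        have h3 := (G.connects_iff_mrel _ a b).1 hcon
        rw [ih] at h3
        exact h3
      rw [ih, G.mrel_snoc,
        eqvGen_sup_pair_absorb (r := G.mrel (· ∈ L)) (G.ends_rep_iff hab)
          ((G.eqvGen_mrel).2 h2), G.eqvGen_mrel_eq]

lemma sel_snoc_pos {L : List E} {e : E}
    (h : ∀ a b, G.ends e = s(a, b) → ¬ G.mrel (· ∈ L) a b) :
    G.sel (L ++ [e]) = insert e (G.sel L) := by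
  have hc : ∀ a b, G.ends e = s(a, b) → ¬ G.Connects (G.sel L) a b := by
    intro a b hab hcon
    refine h a b hab ?_
    rw [← G.mrel_sel L]
    exact (G.connects_iff_mrel _ a b).1 hcon
  rw [G.sel_snoc]
  unfold gstep
  rw [if_pos hc]

lemma sel_snoc_neg {L : List E} {e : E}
    (h : ¬ ∀ a b, G.ends e = s(a, b) → ¬ G.mrel (· ∈ L) a b) :
    G.sel (L ++ [e]) = G.sel L := by
  have hc : ¬ ∀ a b, G.ends e = s(a, b) → ¬ G.Connects (G.sel L) a b := by
    intro hc
    refine h (fun a b hab hm => hc a b hab ?_)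
    refine (G.connects_iff_mrel _ a b).2 ?_
    rw [G.mrel_sel L]
    exact hm
  rw [G.sel_snoc]
  unfold gstep
  rw [if_neg hc]

end Multigraph

section Elist

variable {E : Type} [Fintype E]

/-- the list of all edges in σ-order -/
noncomputable def elist (σ : E ≃ Fin (Fintype.card E)) : List E :=
  (List.finRange (Fintype.card E)).map σ.symm

lemma length_elist (σ : E ≃ Fin (Fintype.card E)) : (elist σ).length = Fintype.card E := by
  simp [elist]

lemma mem_take_finRange {m j : ℕ} (i : Fin m) :
    i ∈ (List.finRange m).take j ↔ (i : ℕ) < j := by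
  rw [List.mem_take_iff_getElem]
  constructor
  · rintro ⟨k, hk, rfl⟩
    simp [List.getElem_finRange]
    omega
  · intro h
    exact ⟨i, by simp [Fin.is_lt]; omega, by simp [List.getElem_finRange]⟩

lemma mem_take_elist {σ : E ≃ Fin (Fintype.card E)} {e : E} {j : ℕ} :
    e ∈ (elist σ).take j ↔ (σ e : ℕ) < j := by
  unfold elist
  rw [← List.map_take]
  simp only [List.mem_map]
  constructor
  · rintro ⟨i, hi, rfl⟩
    rw [mem_take_finRange] at hi
    simpa using hi
  · intro h
    exact ⟨σ e, (mem_take_finRange _).2 h, σ.symm_apply_apply e⟩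

lemma take_succ_elist {σ : E ≃ Fin (Fintype.card E)} {j : ℕ} (hj : j < Fintype.card E) :
    (elist σ).take (j + 1) = (elist σ).take j ++ [σ.symm ⟨j, hj⟩] := by
  rw [List.take_succ]
  congr 1
  rw [List.getElem?_eq_getElem (by simp [elist]; omega)]
  simp [elist, List.getElem_map, List.getElem_finRange]

lemma take_card_elist (σ : E ≃ Fin (Fintype.card E)) :
    (elist σ).take (Fintype.card E) = elist σ := by
  rw [← length_elist σ, List.take_length]

end Elist



section Count

variable {E : Type} [Fintype E]

noncomputable def optionNe (x : E) : E ≃ Option {y : E // y ≠ x} where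
  toFun z := if h : z = x then none else some ⟨z, h⟩
  invFun o := o.elim x Subtype.val
  left_inv z := by by_cases h : z = x <;> simp [h]
  right_inv o := by
    cases o with
    | none => simp
    | some y => simp [y.2]

noncomputable def reduceEquivAux {m : ℕ} (x : E) (σp : {σ : E ≃ Fin (m + 1) // σ x = 0}) :
    {y : E // y ≠ x} ≃ Fin m :=
  Equiv.removeNone ((optionNe x).symm.trans (σp.1.trans (finSuccEquiv m)))

lemma reduceAux_succ {m : ℕ} (x : E) (σp : {σ : E ≃ Fin (m + 1) // σ x = 0})
    (y : {y : E // y ≠ x}) :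
    Fin.succ (reduceEquivAux x σp y) = σp.1 y.1 := by
  set o := (optionNe x).symm.trans (σp.1.trans (finSuccEquiv m)) with ho
  have h1 : o (some y) = finSuccEquiv m (σp.1 y.1) := by
    simp [ho, optionNe]
  have h2 : σp.1 y.1 ≠ 0 := fun h => y.2 (σp.1.injective (h.trans σp.2.symm))
  obtain ⟨i, hi⟩ := Fin.exists_succ_eq.2 h2
  have h3 : o (some y) = some i := by rw [h1, ← hi, finSuccEquiv_succ]
  have h4 := Equiv.removeNone_some o ⟨i, h3⟩
  rw [h3] at h4
  have h5 : Equiv.removeNone o y = i := Option.some.inj h4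
  rw [reduceEquivAux, ← ho, h5, hi]

noncomputable def reduceEquiv {m : ℕ} (x : E) :
    {σ : E ≃ Fin (m + 1) // σ x = 0} ≃ ({y : E // y ≠ x} ≃ Fin m) where
  toFun := reduceEquivAux x
  invFun θ := ⟨(optionNe x).trans (θ.optionCongr.trans (finSuccEquiv m).symm), by
    simp [optionNe]⟩
  left_inv σp := by
    apply Subtype.ext
    apply Equiv.ext
    intro z
    simp only [Equiv.trans_apply]
    by_cases h : z = x
    · subst h
      simp [optionNe, σp.2]
    · have h1 : optionNe x z = some ⟨z, h⟩ := by simp [optionNe, h]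
      rw [h1]
      simp only [Equiv.optionCongr_apply, Option.map_some]
      rw [finSuccEquiv_symm_some]
      exact reduceAux_succ x σp ⟨z, h⟩
  right_inv θ := by
    apply Equiv.ext
    intro y
    refine Fin.succ_injective _ ?_
    rw [show ∀ (σp : {σ : E ≃ Fin (m+1) // σ x = 0}) (z : {y : E // y ≠ x}),
      Fin.succ (reduceEquivAux x σp z) = σp.1 z.1 from fun σp z => reduceAux_succ x σp z]
    simp only [Equiv.trans_apply]
    have h1 : optionNe x y.1 = some y := by simp [optionNe, y.2]
    rw [h1]
    simp only [Equiv.optionCongr_apply, Option.map_some]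
    rw [finSuccEquiv_symm_some]

lemma reduceEquiv_lt_iff {m : ℕ} (x : E) (σp : {σ : E ≃ Fin (m + 1) // σ x = 0})
    (y z : {y : E // y ≠ x}) :
    reduceEquiv x σp y < reduceEquiv x σp z ↔ σp.1 y.1 < σp.1 z.1 := by
  rw [← Fin.succ_lt_succ_iff]
  show Fin.succ (reduceEquivAux x σp y) < Fin.succ (reduceEquivAux x σp z) ↔ _
  rw [reduceAux_succ, reduceAux_succ]

lemma count_trivial {E' : Type} [Fintype E'] {m : ℕ} (hE : Fintype.card E' = m)
    (P : (E' ≃ Fin m) → Prop) (hP : ∀ σ, P σ) :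
    Nat.card {σ : E' ≃ Fin m // P σ} = m.factorial := by
  rw [Nat.card_congr (Equiv.subtypeUnivEquiv hP), Nat.card_eq_fintype_card,
    Fintype.card_equiv (Fintype.equivFinOfCardEq hE), hE]

set_option maxHeartbeats 1000000 in
lemma count_main (m : ℕ) : ∀ (E' : Type) [Fintype E'], Fintype.card E' = m →
    ∀ (n : ℕ) (A : Fin n → Finset E') (t : Fin n → E'),
    (∀ p, t p ∈ A p) →
    (∀ p q, p ≤ q → A q ⊆ A p) →
    (∀ p q, p < q → t p ∉ A q) →
    Nat.card {σ : E' ≃ Fin m // ∀ p, ∀ e ∈ A p, e ≠ t p → σ (t p) < σ e}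
      * ∏ p : Fin n, (A p).card = m.factorial := by
  induction m with
  | zero =>
    intro E' _ hE n A t ht _ _
    match n with
    | 0 =>
      simp only [Finset.univ_eq_empty, Finset.prod_empty, mul_one, Nat.factorial_zero]
      exact count_trivial hE _ (fun σ p => Fin.elim0 p)
    | (n' + 1) =>
      haveI := Fintype.card_eq_zero_iff.1 hE
      exact (this.false (t 0)).elim
  | succ m ih =>
    intro E' _ hE n A t ht hA htA
    match n with
    | 0 =>
      simp only [Finset.univ_eq_empty, Finset.prod_empty, mul_one]
      exact count_trivial hE _ (fun σ p => Fin.elim0 p)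
    | (n' + 1) =>
      set P : (E' ≃ Fin (m + 1)) → Prop :=
        fun σ => ∀ p, ∀ e ∈ A p, e ≠ t p → σ (t p) < σ e with hP
      set K : ℕ := ∏ p : Fin (n' + 1), (A p).card with hK
      -- N = sum of fiber cards
      have hsum : Nat.card {σ : E' ≃ Fin (m + 1) // P σ}
          = ∑ x : E', Nat.card {σ : E' ≃ Fin (m + 1) // P σ ∧ σ x = 0} := by
        rw [Nat.card_eq_fintype_card, Fintype.card_subtype]
        rw [Finset.card_eq_sum_card_fiberwise
          (f := fun σ : E' ≃ Fin (m + 1) => σ.symm 0) (t := Finset.univ)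
          (fun σ _ => Finset.mem_univ _)]
        refine Finset.sum_congr rfl (fun x _ => ?_)
        rw [Nat.card_eq_fintype_card, Fintype.card_subtype, Finset.filter_filter]
        refine congrArg Finset.card (Finset.filter_congr (fun σ _ => ?_))
        constructor
        · rintro ⟨h1, h2⟩; exact ⟨h1, by rw [← h2, Equiv.apply_symm_apply]⟩
        · rintro ⟨h1, h2⟩; exact ⟨h1, by rw [← h2, Equiv.symm_apply_apply]⟩
      -- fiber where x is in A 0 but not t 0 : empty
      have hcase1 : ∀ x, x ∈ A 0 → x ≠ t 0 →
          Nat.card {σ : E' ≃ Fin (m + 1) // P σ ∧ σ x = 0} = 0 := by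
        intro x hx hne
        rw [Nat.card_eq_zero]
        refine Or.inl ?_
        constructor
        rintro ⟨σ, hPσ, hx0⟩
        have := hPσ 0 x hx hne
        rw [hx0] at this
        exact Fin.not_lt_zero _ this
      -- generic reduction of a fiber
      have hred : ∀ (x : E') (Q : ({y : E' // y ≠ x} ≃ Fin m) → Prop),
          (∀ σp : {σ : E' ≃ Fin (m + 1) // σ x = 0}, P σp.1 ↔ Q (reduceEquiv x σp)) →
          Nat.card {σ : E' ≃ Fin (m + 1) // P σ ∧ σ x = 0}
            = Nat.card {θ : {y : E' // y ≠ x} ≃ Fin m // Q θ} := by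
        intro x Q hiff
        refine Nat.card_congr ?_
        refine (Equiv.subtypeEquivRight (fun σ => and_comm)).trans ?_
        refine ((Equiv.subtypeSubtypeEquivSubtypeInter _ _).symm).trans ?_
        exact Equiv.subtypeEquiv (reduceEquiv x) (fun σp => hiff σp)
      have hcardNe : ∀ x : E', Fintype.card {y : E' // y ≠ x} = m := by
        intro x
        have h1 := Fintype.card_subtype_compl (fun y : E' => y = x)
        rw [Fintype.card_subtype_eq, hE] at h1
        simpa using h1
      -- the fiber at t 0
      have hcase2 : Nat.card {σ : E' ≃ Fin (m + 1) // P σ ∧ σ (t 0) = 0}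
          * ∏ p : Fin n', (A p.succ).card = m.factorial := by
        set x := t 0 with hx
        have hxA : ∀ p : Fin n', x ∉ A p.succ := fun p => htA 0 p.succ (Fin.succ_pos p)
        have htne : ∀ p : Fin n', t p.succ ≠ x := by
          intro p h
          exact hxA p (h ▸ ht p.succ)
        set A' : Fin n' → Finset {y : E' // y ≠ x} :=
          fun p => (A p.succ).subtype (· ≠ x) with hA'
        set t' : Fin n' → {y : E' // y ≠ x} := fun p => ⟨t p.succ, htne p⟩ with ht'
        have hiff : ∀ σp : {σ : E' ≃ Fin (m + 1) // σ x = 0}, P σp.1 ↔ (∀ p, ∀ e ∈ A' p, e ≠ t' p → (reduceEquiv x σp) (t' p) < (reduceEquiv x σp) e) := by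
          intro σp
          constructor
          · intro h p e' he' hne'
            rw [reduceEquiv_lt_iff]
            have h1 : e'.1 ∈ A p.succ := by
              rw [hA'] at he'
              exact (Finset.mem_subtype).1 he'
            refine h p.succ e'.1 h1 (fun hh => hne' ?_)
            apply Subtype.ext
            exact hh
          · intro h p e he hne
            rcases Fin.eq_zero_or_eq_succ p with rfl | ⟨q, rfl⟩
            · rw [σp.2]
              rw [Fin.pos_iff_ne_zero]
              intro h0
              exact hne (σp.1.injective (h0.trans σp.2.symm))
            · have hex : e ≠ x := by
                intro hh
                exact hxA q (hh ▸ he)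
              have h1 : (⟨e, hex⟩ : {y : E' // y ≠ x}) ∈ A' q := by
                rw [hA']
                exact (Finset.mem_subtype).2 he
              have h2 := h q ⟨e, hex⟩ h1 (fun hh => hne (congrArg Subtype.val hh))
              rw [reduceEquiv_lt_iff] at h2
              exact h2
        rw [hred x (fun θ => ∀ p, ∀ e ∈ A' p, e ≠ t' p → θ (t' p) < θ e) hiff]
        have hcardA' : ∀ p : Fin n', (A' p).card = (A p.succ).card := by
          intro p
          rw [hA']
          rw [Finset.card_subtype]
          congr 1
          exact Finset.filter_true_of_mem (fun e he hh => hxA p (hh ▸ he))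
        rw [show ∏ p : Fin n', (A p.succ).card = ∏ p : Fin n', (A' p).card from
          Finset.prod_congr rfl (fun p _ => (hcardA' p).symm)]
        refine ih {y : E' // y ≠ x} (hcardNe x) n' A' t' ?_ ?_ ?_
        · intro p
          rw [hA', ht']
          exact (Finset.mem_subtype).2 (ht p.succ)
        · intro p q hpq e' he'
          rw [hA'] at he' ⊢
          rw [Finset.mem_subtype] at he' ⊢
          exact hA p.succ q.succ (Fin.succ_le_succ_iff.2 hpq) he'
        · intro p q hpq he'
          rw [hA', ht', Finset.mem_subtype] at he'
          exact htA p.succ q.succ (Fin.succ_lt_succ_iff.2 hpq) he'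
      -- fibers outside A 0
      have hcase3 : ∀ x : E', x ∉ A 0 →
          Nat.card {σ : E' ≃ Fin (m + 1) // P σ ∧ σ x = 0} * K = m.factorial := by
        intro x hxA0
        have hxA : ∀ p : Fin (n' + 1), x ∉ A p := fun p h => hxA0 (hA 0 p (Fin.zero_le p) h)
        have htne : ∀ p : Fin (n' + 1), t p ≠ x := by
          intro p h
          exact hxA p (h ▸ ht p)
        set A' : Fin (n' + 1) → Finset {y : E' // y ≠ x} :=
          fun p => (A p).subtype (· ≠ x) with hA'
        set t' : Fin (n' + 1) → {y : E' // y ≠ x} := fun p => ⟨t p, htne p⟩ with ht'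
        have hiff : ∀ σp : {σ : E' ≃ Fin (m + 1) // σ x = 0}, P σp.1 ↔ (∀ p, ∀ e ∈ A' p, e ≠ t' p → (reduceEquiv x σp) (t' p) < (reduceEquiv x σp) e) := by
          intro σp
          constructor
          · intro h p e' he' hne'
            rw [reduceEquiv_lt_iff]
            have h1 : e'.1 ∈ A p := by
              rw [hA'] at he'
              exact (Finset.mem_subtype).1 he'
            exact h p e'.1 h1 (fun hh => hne' (Subtype.ext hh))
          · intro h p e he hne
            have hex : e ≠ x := fun hh => hxA p (hh ▸ he)
            have h1 : (⟨e, hex⟩ : {y : E' // y ≠ x}) ∈ A' p := by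
              rw [hA']
              exact (Finset.mem_subtype).2 he
            have h2 := h p ⟨e, hex⟩ h1 (fun hh => hne (congrArg Subtype.val hh))
            rw [reduceEquiv_lt_iff] at h2
            exact h2
        rw [hred x (fun θ => ∀ p, ∀ e ∈ A' p, e ≠ t' p → θ (t' p) < θ e) hiff]
        have hcardA' : ∀ p : Fin (n' + 1), (A' p).card = (A p).card := by
          intro p
          rw [hA', Finset.card_subtype]
          congr 1
          exact Finset.filter_true_of_mem (fun e he hh => hxA p (hh ▸ he))
        rw [hK, show ∏ p : Fin (n' + 1), (A p).card = ∏ p : Fin (n' + 1), (A' p).card from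
          Finset.prod_congr rfl (fun p _ => (hcardA' p).symm)]
        refine ih {y : E' // y ≠ x} (hcardNe x) (n' + 1) A' t' ?_ ?_ ?_
        · intro p
          rw [hA', ht']
          exact (Finset.mem_subtype).2 (ht p)
        · intro p q hpq e' he'
          rw [hA'] at he' ⊢
          rw [Finset.mem_subtype] at he' ⊢
          exact hA p q hpq he'
        · intro p q hpq he'
          rw [hA', ht', Finset.mem_subtype] at he'
          exact htA p q hpq he'
      -- assemble
      rw [hsum, Finset.sum_mul]
      rw [← Finset.sum_compl_add_sum (A 0)
        (fun x => Nat.card {σ : E' ≃ Fin (m + 1) // P σ ∧ σ x = 0} * K)]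
      have h1 : ∑ x ∈ (A 0)ᶜ, Nat.card {σ : E' ≃ Fin (m + 1) // P σ ∧ σ x = 0} * K
          = (A 0)ᶜ.card * m.factorial := by
        rw [Finset.sum_congr rfl (fun x hx => hcase3 x (Finset.mem_compl.1 hx))]
        rw [Finset.sum_const, smul_eq_mul]
      have h2 : ∑ x ∈ A 0, Nat.card {σ : E' ≃ Fin (m + 1) // P σ ∧ σ x = 0} * K
          = (A 0).card * m.factorial := by
        rw [Finset.sum_eq_single_of_mem (t 0) (ht 0)
          (fun x hx hne => by rw [hcase1 x hx hne, zero_mul])]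
        have hKsplit : K = (A 0).card * ∏ p : Fin n', (A p.succ).card := by
          rw [hK, Fin.prod_univ_succ]
        rw [hKsplit, ← mul_assoc, mul_comm _ ((A 0).card), mul_assoc, hcase2]
      rw [h1, h2, Finset.card_compl, hE]
      have ha : (A 0).card ≤ m + 1 := by
        rw [← hE]
        exact Finset.card_le_univ _
      rw [← Nat.add_mul, Nat.sub_add_cancel ha, Nat.factorial_succ]

end Count


section Sorting

variable {E : Type} [Fintype E]

noncomputable def imgEquiv (σ : E ≃ Fin (Fintype.card E)) (T : Finset E) :
    {x : Fin (Fintype.card E) // x ∈ T.image σ} ≃ {e // e ∈ T} where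
  toFun x := ⟨σ.symm x.1, by
    obtain ⟨e, he, hee⟩ := Finset.mem_image.1 x.2
    rw [← hee, Equiv.symm_apply_apply]
    exact he⟩
  invFun e := ⟨σ e.1, Finset.mem_image_of_mem σ e.2⟩
  left_inv x := Subtype.ext (Equiv.apply_symm_apply σ x.1)
  right_inv e := Subtype.ext (Equiv.symm_apply_apply σ e.1)

noncomputable def sortEquiv (σ : E ≃ Fin (Fintype.card E)) (T : Finset E) :
    Fin T.card ≃ {e // e ∈ T} :=
  ((T.image σ).orderIsoOfFin
    (Finset.card_image_of_injective T σ.injective)).toEquiv.trans (imgEquiv σ T)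

lemma sortEquiv_strictMono (σ : E ≃ Fin (Fintype.card E)) (T : Finset E) :
    StrictMono (fun p : Fin T.card => σ ((sortEquiv σ T p).1)) := by
  intro p q hpq
  have h2 : ∀ r : Fin T.card, σ ((sortEquiv σ T r).1)
      = ((T.image σ).orderIsoOfFin (Finset.card_image_of_injective T σ.injective) r).1 := by
    intro r
    show σ (σ.symm _) = _
    rw [Equiv.apply_symm_apply]
    rfl
  show σ ((sortEquiv σ T p).1) < σ ((sortEquiv σ T q).1)
  rw [h2 p, h2 q]
  exact ((T.image σ).orderIsoOfFin
    (Finset.card_image_of_injective T σ.injective)).lt_iff_lt.2 hpq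

set_option linter.deprecated false in
lemma sortEquiv_unique (σ : E ≃ Fin (Fintype.card E)) (T : Finset E)
    (τ : Fin T.card ≃ {e // e ∈ T})
    (h : StrictMono (fun p => σ ((τ p).1))) : τ = sortEquiv σ T := by
  have hrange : Set.range (fun p => σ ((τ p).1))
      = Set.range (fun p => σ ((sortEquiv σ T p).1)) := by
    ext x
    simp only [Set.mem_range]
    constructor
    · rintro ⟨p, rfl⟩
      exact ⟨(sortEquiv σ T).symm (τ p), by rw [Equiv.apply_symm_apply]⟩
    · rintro ⟨p, rfl⟩
      exact ⟨τ.symm (sortEquiv σ T p), by rw [Equiv.apply_symm_apply]⟩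
  have hfun := (h.range_inj (sortEquiv_strictMono σ T)).1 hrange
  refine Equiv.ext (fun p => ?_)
  exact Subtype.ext (σ.injective (congrFun hfun p))

lemma sortEquiv_eq_iff (σ : E ≃ Fin (Fintype.card E)) (T : Finset E)
    (τ : Fin T.card ≃ {e // e ∈ T}) :
    sortEquiv σ T = τ ↔ StrictMono (fun p => σ ((τ p).1)) :=
  ⟨fun h => h ▸ sortEquiv_strictMono σ T, fun h => (sortEquiv_unique σ T τ h).symm⟩

lemma mem_take_ofFn' {α : Type} {n : ℕ} (f : Fin n → α) {e : α} {p : ℕ} :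
    e ∈ (List.ofFn f).take p ↔ ∃ i : Fin n, i.1 < p ∧ f i = e := by
  rw [List.mem_take_iff_getElem]
  constructor
  · rintro ⟨k, hk, rfl⟩
    rw [List.getElem_ofFn]
    have hk1 : k < p := (lt_min_iff.1 hk).1
    have hk2 : k < n := by
      have := (lt_min_iff.1 hk).2
      simpa using this
    exact ⟨⟨k, hk2⟩, hk1, rfl⟩
  · rintro ⟨i, hip, rfl⟩
    refine ⟨i.1, by simp [lt_min_iff, hip, i.2], ?_⟩
    rw [List.getElem_ofFn]

end Sorting

namespace Multigraph

variable {V E : Type} (G : Multigraph V E)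

section Main

variable [Fintype V] [Fintype E]

noncomputable def Ablock (T : Finset E) (τ : Fin T.card ≃ {e // e ∈ T}) (p : ℕ) : Finset E :=
  Finset.univ.filter fun e =>
    G.TransBlock (G.state Eq ((List.ofFn fun i => ((τ i : E))).take p)).2 e

lemma block_eq (T : Finset E) (τ : Fin T.card ≃ {e // e ∈ T}) (p : ℕ) :
    (G.state Eq ((List.ofFn fun i => ((τ i : E))).take p)).2
      = G.mrel (fun e => ∃ i : Fin T.card, i.1 < p ∧ (τ i).1 = e) := by
  rw [G.state_snd_eq_mrel]
  exact G.mrel_congr (fun e => mem_take_ofFn' _)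

lemma mem_Ablock_iff {T : Finset E} {τ : Fin T.card ≃ {e // e ∈ T}} {p : ℕ} {e : E} :
    e ∈ G.Ablock T τ p ↔
      ∀ a b, G.ends e = s(a, b) →
        ¬ G.mrel (fun e' => ∃ i : Fin T.card, i.1 < p ∧ (τ i).1 = e') a b := by
  unfold Ablock
  rw [Finset.mem_filter]
  simp only [Finset.mem_univ, true_and]
  rw [G.block_eq T τ p]
  exact Iff.rfl

lemma tEdge_mem_Ablock {T : Finset E} (htot : ∀ v w : V, G.mrel (· ∈ T) v w)
    (hcard : T.card = Fintype.card V - 1)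
    (τ : Fin T.card ≃ {e // e ∈ T}) (p : Fin T.card) :
    (τ p).1 ∈ G.Ablock T τ p.1 := by
  rw [G.mem_Ablock_iff]
  intro a b hab
  refine G.tree_transBlock htot hcard (τ p).2 _ ?_ hab
  rintro e' ⟨i, hip, rfl⟩
  refine ⟨(τ i).2, fun h => ?_⟩
  have : i = p := τ.injective (Subtype.ext h)
  omega

lemma Ablock_antitone (T : Finset E) (τ : Fin T.card ≃ {e // e ∈ T}) {p q : ℕ}
    (hpq : p ≤ q) : G.Ablock T τ q ⊆ G.Ablock T τ p := by
  intro e he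
  rw [G.mem_Ablock_iff] at he ⊢
  intro a b hab hB
  exact he a b hab
    (G.mrel_mono (fun e' => fun ⟨i, hip, hie⟩ => ⟨i, lt_of_lt_of_le hip hpq, hie⟩) hB)

lemma tEdge_not_mem_Ablock (T : Finset E) (τ : Fin T.card ≃ {e // e ∈ T})
    {p q : Fin T.card} (hpq : p < q) : (τ p).1 ∉ G.Ablock T τ q.1 := by
  obtain ⟨a, b, hab⟩ := G.ends_exists ((τ p).1)
  rw [G.mem_Ablock_iff]
  intro h
  exact h a b hab (G.mrel_of_ends ⟨p, hpq, rfl⟩ hab)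

set_option maxHeartbeats 1000000 in
lemma main_iff {T : Finset E} (htot : ∀ v w : V, G.mrel (· ∈ T) v w)
    (hcard : T.card = Fintype.card V - 1)
    (τ : Fin T.card ≃ {e // e ∈ T}) (σ : E ≃ Fin (Fintype.card E)) :
    (G.kruskal σ = T ∧ StrictMono (fun p : Fin T.card => σ ((τ p).1)))
      ↔ ∀ p : Fin T.card, ∀ e ∈ G.Ablock T τ p.1, e ≠ (τ p).1 → σ ((τ p).1) < σ e := by
  have hksel : G.kruskal σ = G.sel (elist σ) := rfl
  have hmrelGen : ∀ (j : ℕ) (p : Fin T.card),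
      G.sel ((elist σ).take j)
        = Finset.image (fun q => (τ q).1) (Finset.univ.filter fun q : Fin T.card => q < p) →
      G.mrel (· ∈ (elist σ).take j)
        = G.mrel (fun e' => ∃ i : Fin T.card, i.1 < p.1 ∧ (τ i).1 = e') := by
    intro j p hselj
    rw [← G.mrel_sel ((elist σ).take j), hselj]
    refine G.mrel_congr (fun e' => ?_)
    simp only [Finset.mem_image, Finset.mem_filter, Finset.mem_univ, true_and]
    constructor
    · rintro ⟨q, hq, rfl⟩
      exact ⟨q, hq, rfl⟩
    · rintro ⟨i, hip, rfl⟩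
      exact ⟨i, hip, rfl⟩
  constructor
  · -- forward direction
    rintro ⟨hk, hsm⟩ p e heA hne
    by_contra hlt
    push_neg at hlt
    have hlt' : σ e < σ ((τ p).1) := lt_of_le_of_ne hlt (fun h => hne (σ.injective h))
    by_cases heT : e ∈ T
    · set q := τ.symm ⟨e, heT⟩ with hq
      have hqe : (τ q).1 = e := by rw [hq, Equiv.apply_symm_apply]
      have hqp : q ≠ p := fun h => hne (by rw [← hqe, h])
      rcases lt_or_gt_of_ne hqp with h | h
      · exact G.tEdge_not_mem_Ablock T τ h (hqe ▸ heA)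
      · have hmono : σ ((τ p).1) < σ ((τ q).1) := hsm h
        rw [hqe] at hmono
        exact absurd hmono (not_lt.2 (le_of_lt hlt'))
    · set j := (σ e).1 with hj0
      have hj : j < Fintype.card E := (σ e).2
      have hee : σ.symm ⟨j, hj⟩ = e := by
        have h1 : (⟨j, hj⟩ : Fin (Fintype.card E)) = σ e := Fin.ext rfl
        rw [h1, Equiv.symm_apply_apply]
      have hselT : G.sel (elist σ) = T := by rw [← hksel, hk]
      have hsub : G.sel ((elist σ).take (j + 1)) ⊆ T := by
        have h1 := G.sel_prefix_subset ((elist σ).take (j + 1)) ((elist σ).drop (j + 1))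
        rw [List.take_append_drop, hselT] at h1
        exact h1
      have hrej : e ∉ G.sel ((elist σ).take (j + 1)) := fun h => heT (hsub h)
      have hsnoc : (elist σ).take (j + 1) = (elist σ).take j ++ [e] := by
        rw [take_succ_elist hj, hee]
      have hcon : ¬ ∀ a b, G.ends e = s(a, b) → ¬ G.mrel (· ∈ (elist σ).take j) a b := by
        intro hc
        apply hrej
        rw [hsnoc, G.sel_snoc_pos hc]
        exact Finset.mem_insert_self _ _
      push_neg at hcon
      obtain ⟨a, b, hab, hB⟩ := hcon
      have hmono : G.mrel (fun e' => ∃ i : Fin T.card, i.1 < p.1 ∧ (τ i).1 = e') a b := by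
        rw [← G.mrel_sel ((elist σ).take j)] at hB
        refine G.mrel_mono ?_ hB
        intro e'' he''
        have h1 : e'' ∈ T := by
          refine hsub ?_
          rw [hsnoc]
          exact G.sel_prefix_subset _ _ he''
        have h2 : (σ e'').1 < j := mem_take_elist.1 (G.mem_of_mem_sel he'')
        set i := τ.symm ⟨e'', h1⟩ with hi
        have hie : (τ i).1 = e'' := by rw [hi, Equiv.apply_symm_apply]
        refine ⟨i, ?_, hie⟩
        have h3 : σ ((τ i).1) < σ ((τ p).1) := by
          rw [hie]
          refine lt_trans ?_ hlt'
          exact Fin.lt_def.2 (by omega)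
        exact hsm.lt_iff_lt.1 h3
      exact (G.mem_Ablock_iff).1 heA a b hab hmono
  · -- backward direction
    intro hEv
    have hsm : StrictMono (fun p : Fin T.card => σ ((τ p).1)) := by
      intro p q hpq
      have h1 : (τ q).1 ∈ G.Ablock T τ p.1 :=
        G.Ablock_antitone T τ (le_of_lt hpq) (G.tEdge_mem_Ablock htot hcard τ q)
      have hne : (τ q).1 ≠ (τ p).1 := fun h => (ne_of_gt hpq) (τ.injective (Subtype.ext h))
      exact hEv p ((τ q).1) h1 hne
    have hsel : ∀ j, j ≤ Fintype.card E →
        G.sel ((elist σ).take j)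
          = Finset.image (fun p => (τ p).1)
              (Finset.univ.filter fun p : Fin T.card => (σ ((τ p).1)).1 < j) := by
      intro j
      induction j with
      | zero =>
        intro _
        have h1 : (Finset.univ.filter fun p : Fin T.card => (σ ((τ p).1)).1 < 0) = ∅ :=
          Finset.filter_false_of_mem (fun p _ => by omega)
        simp only [List.take_zero, h1, Finset.image_empty]
        rfl
      | succ j ihj =>
        intro hj1
        have hj : j < Fintype.card E := hj1
        have hIH := ihj (le_of_lt hj)
        rw [take_succ_elist hj]
        by_cases hcase : ∃ p : Fin T.card, (τ p).1 = σ.symm ⟨j, hj⟩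
        · obtain ⟨p, hp⟩ := hcase
          have hσp : σ ((τ p).1) = ⟨j, hj⟩ := by rw [hp, Equiv.apply_symm_apply]
          have hfil : (Finset.univ.filter fun q : Fin T.card => (σ ((τ q).1)).1 < j)
              = Finset.univ.filter fun q : Fin T.card => q < p := by
            refine Finset.filter_congr (fun q _ => ?_)
            constructor
            · intro h
              refine (hsm.lt_iff_lt).1 ?_
              rw [hσp]
              exact Fin.lt_def.2 h
            · intro h
              have h2 : σ ((τ q).1) < σ ((τ p).1) := hsm h
              rw [hσp] at h2
              exact Fin.lt_def.1 h2
          have hmrelP := hmrelGen j p (by rw [hIH, hfil])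
          have hacc : ∀ a b, G.ends (σ.symm ⟨j, hj⟩) = s(a, b) →
              ¬ G.mrel (· ∈ (elist σ).take j) a b := by
            intro a b hab hB
            rw [hmrelP] at hB
            exact (G.mem_Ablock_iff).1 (G.tEdge_mem_Ablock htot hcard τ p) a b
              (hp ▸ hab) hB
          rw [G.sel_snoc_pos hacc, hIH]
          have hfil2 : (Finset.univ.filter fun q : Fin T.card => (σ ((τ q).1)).1 < j + 1)
              = insert p (Finset.univ.filter fun q : Fin T.card => (σ ((τ q).1)).1 < j) := by
            ext q
            simp only [Finset.mem_insert, Finset.mem_filter, Finset.mem_univ, true_and]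
            constructor
            · intro h
              rcases Nat.lt_succ_iff_lt_or_eq.1 h with h' | h'
              · exact Or.inr h'
              · left
                have h3 : σ ((τ q).1) = ⟨j, hj⟩ := Fin.ext h'
                exact τ.injective (Subtype.ext (σ.injective (h3.trans hσp.symm)))
            · rintro (rfl | h)
              · rw [hσp]
                exact Nat.lt_succ_self j
              · omega
          rw [hfil2, Finset.image_insert, hp]
        · push_neg at hcase
          have hfil2 : (Finset.univ.filter fun q : Fin T.card => (σ ((τ q).1)).1 < j + 1)
              = Finset.univ.filter fun q : Fin T.card => (σ ((τ q).1)).1 < j := by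
            refine Finset.filter_congr (fun q _ => ?_)
            have hne : (σ ((τ q).1)).1 ≠ j := by
              intro h
              refine hcase q ?_
              rw [← Equiv.symm_apply_apply σ ((τ q).1)]
              congr 1
              exact Fin.ext h
            omega
          have hrej : ¬ ∀ a b, G.ends (σ.symm ⟨j, hj⟩) = s(a, b) →
              ¬ G.mrel (· ∈ (elist σ).take j) a b := by
            by_cases hall : ∀ q : Fin T.card, (σ ((τ q).1)).1 < j
            · obtain ⟨a, b, hab⟩ := G.ends_exists (σ.symm ⟨j, hj⟩)
              intro hcontr
              refine hcontr a b hab ?_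
              rw [← G.mrel_sel ((elist σ).take j), hIH]
              have himg : Finset.image (fun p => (τ p).1)
                  (Finset.univ.filter fun p : Fin T.card => (σ ((τ p).1)).1 < j) = T := by
                ext e'
                simp only [Finset.mem_image, Finset.mem_filter, Finset.mem_univ, true_and]
                constructor
                · rintro ⟨q, _, rfl⟩
                  exact (τ q).2
                · intro he'
                  exact ⟨τ.symm ⟨e', he'⟩, hall _, by rw [Equiv.apply_symm_apply]⟩
              rw [himg]
              exact htot a b
            · push_neg at hall
              obtain ⟨q0, hq0⟩ := hall
              have hFne : (Finset.univ.filter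
                  fun q : Fin T.card => j ≤ (σ ((τ q).1)).1).Nonempty :=
                ⟨q0, by simp only [Finset.mem_filter, Finset.mem_univ, true_and]; omega⟩
              set p := (Finset.univ.filter
                fun q : Fin T.card => j ≤ (σ ((τ q).1)).1).min' hFne with hpdef
              have hpF : j ≤ (σ ((τ p).1)).1 := by
                have h1 := Finset.min'_mem _ hFne
                rw [← hpdef] at h1
                simpa using h1
              have hfil : (Finset.univ.filter fun q : Fin T.card => (σ ((τ q).1)).1 < j)
                  = Finset.univ.filter fun q : Fin T.card => q < p := by
                refine Finset.filter_congr (fun q _ => ?_)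
                constructor
                · intro h
                  by_contra hq
                  push_neg at hq
                  have h2 := hsm.monotone hq
                  have h3 := Fin.le_def.1 h2
                  omega
                · intro h
                  by_contra hq
                  push_neg at hq
                  have h4 : q ∈ Finset.univ.filter
                      fun q : Fin T.card => j ≤ (σ ((τ q).1)).1 := by
                    simp only [Finset.mem_filter, Finset.mem_univ, true_and]
                    omega
                  have h5 := Finset.min'_le _ q h4
                  rw [← hpdef] at h5
                  exact absurd h5 (not_le.2 h)
              have heA : σ.symm ⟨j, hj⟩ ∉ G.Ablock T τ p.1 := by
                intro heA
                have h1 := hEv p (σ.symm ⟨j, hj⟩) heA (fun h => hcase p h.symm)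
                rw [Equiv.apply_symm_apply] at h1
                have h2 := Fin.lt_def.1 h1
                simp only at h2
                omega
              rw [G.mem_Ablock_iff] at heA
              push_neg at heA
              obtain ⟨a, b, hab, hB⟩ := heA
              intro hcontr
              refine hcontr a b hab ?_
              rw [hmrelGen j p (by rw [hIH, hfil])]
              exact hB
          rw [G.sel_snoc_neg hrej, hIH, hfil2]
    have hk : G.kruskal σ = T := by
      have h1 := hsel (Fintype.card E) le_rfl
      rw [take_card_elist] at h1
      have hfull : Finset.image (fun p => (τ p).1)
          (Finset.univ.filter fun p : Fin T.card => (σ ((τ p).1)).1 < Fintype.card E) = T := by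
        rw [Finset.filter_true_of_mem (fun p _ => (σ ((τ p).1)).isLt)]
        ext e'
        simp only [Finset.mem_image, Finset.mem_univ, true_and]
        constructor
        · rintro ⟨q, rfl⟩
          exact (τ q).2
        · intro he'
          exact ⟨τ.symm ⟨e', he'⟩, by rw [Equiv.apply_symm_apply]⟩
      rw [hksel, h1, hfull]
    exact ⟨hk, hsm⟩

lemma fiber_count {T : Finset E} (htot : ∀ v w : V, G.mrel (· ∈ T) v w)
    (hcard : T.card = Fintype.card V - 1) (τ : Fin T.card ≃ {e // e ∈ T}) :
    Nat.card {σ : E ≃ Fin (Fintype.card E) //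
        G.kruskal σ = T ∧ StrictMono (fun p : Fin T.card => σ ((τ p).1))}
      * ∏ p : Fin T.card, (G.Ablock T τ p.1).card = (Fintype.card E).factorial := by
  rw [Nat.card_congr (Equiv.subtypeEquivRight (fun σ => G.main_iff htot hcard τ σ))]
  exact count_main (Fintype.card E) E rfl T.card (fun p => G.Ablock T τ p.1)
    (fun p => (τ p).1)
    (fun p => G.tEdge_mem_Ablock htot hcard τ p)
    (fun p q hpq => G.Ablock_antitone T τ hpq)
    (fun p q hpq => G.tEdge_not_mem_Ablock T τ hpq)

lemma group_count (T : Finset E) :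
    Nat.card {σ : E ≃ Fin (Fintype.card E) // G.kruskal σ = T}
      = ∑ τ : Fin T.card ≃ {e // e ∈ T},
          Nat.card {σ : E ≃ Fin (Fintype.card E) //
            G.kruskal σ = T ∧ StrictMono (fun p : Fin T.card => σ ((τ p).1))} := by
  rw [Nat.card_eq_fintype_card, Fintype.card_subtype]
  rw [Finset.card_eq_sum_card_fiberwise (f := fun σ => sortEquiv σ T) (t := Finset.univ)
    (fun _ _ => Finset.mem_univ _)]
  refine Finset.sum_congr rfl (fun τ _ => ?_)
  rw [Nat.card_eq_fintype_card, Fintype.card_subtype, Finset.filter_filter]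
  refine congrArg Finset.card (Finset.filter_congr (fun σ _ => ?_))
  constructor
  · rintro ⟨h1, h2⟩
    exact ⟨h1, (sortEquiv_eq_iff σ T τ).1 h2⟩
  · rintro ⟨h1, h2⟩
    exact ⟨h1, (sortEquiv_eq_iff σ T τ).2 h2⟩

lemma wOrd_eq {T : Finset E} (htot : ∀ v w : V, G.mrel (· ∈ T) v w)
    (hcard : T.card = Fintype.card V - 1) (τ : Fin T.card ≃ {e // e ∈ T}) :
    G.wOrd (Eq : V → V → Prop) (List.ofFn fun i => ((τ i : E)))
      = ∏ p : Fin T.card, ((G.Ablock T τ p.1).card : ℚ)⁻¹ := by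
  have htbs : G.IsTransBlockSeq (Eq : V → V → Prop) (List.ofFn fun i => ((τ i : E))) := by
    intro p hp
    have hlen : p < T.card := by simpa using hp
    have hget : (List.ofFn fun i => ((τ i : E))).get ⟨p, hp⟩ = (τ ⟨p, hlen⟩).1 := by
      rw [List.get_ofFn]
      congr 1
    rw [hget, G.block_eq T τ p]
    have h1 := G.tEdge_mem_Ablock htot hcard τ ⟨p, hlen⟩
    rw [G.mem_Ablock_iff] at h1
    intro a b hab
    exact h1 a b hab
  rw [wOrd, if_pos htbs, ← hcard,
    ← Fin.prod_univ_eq_prod_range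
      (fun p => ((G.kcount (Eq : V → V → Prop) (List.ofFn fun i => ((τ i : E))) p : ℚ))⁻¹)
      T.card]
  exact Finset.prod_congr rfl (fun p _ => rfl)

end Main

end Multigraph

/-- for the partition of `V` into `|V|` singletons (i.e. the
block relation is equality), the partition weight coincides with the
symmetric weight: the fraction of Hepp sectors whose Kruskal leading tree is
`T` equals `∑_{τ orderings of T} ∏_p 1/k_p(T_τ)`. -/
theorem ws_eq_wPi_singleton_partition
    {V E : Type} [Fintype V] [Fintype E] [Nonempty V]
    (G : Multigraph V E) (hG : G.IsConnected)
    (T : Finset E) (hT : G.IsSpanningTree T) :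
    G.ws T = G.wPi (Eq : V → V → Prop) T := by
  obtain ⟨htot0, hcard⟩ := hT
  have htot : ∀ v w : V, G.mrel (· ∈ T) v w :=
    fun v w => (G.connects_iff_mrel T v w).1 (htot0 v w)
  unfold Multigraph.ws Multigraph.wPi
  rw [show (Fintype.card {σ : E ≃ Fin (Fintype.card E) // G.kruskal σ = T} : ℚ)
      = (Nat.card {σ : E ≃ Fin (Fintype.card E) // G.kruskal σ = T} : ℚ) from by
    rw [Nat.card_eq_fintype_card]]
  rw [G.group_count T]
  push_cast
  rw [Finset.sum_div]
  refine Finset.sum_congr rfl (fun τ _ => ?_)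
  rw [G.wOrd_eq htot hcard τ]
  have hcount := G.fiber_count htot hcard τ
  have hk0 : ∀ p : Fin T.card, (G.Ablock T τ p.1).card ≠ 0 := fun p =>
    Finset.card_ne_zero_of_mem (G.tEdge_mem_Ablock htot hcard τ p)
  have hK0 : (∏ p : Fin T.card, ((G.Ablock T τ p.1).card : ℚ)) ≠ 0 :=
    Finset.prod_ne_zero_iff.2 (fun p _ => Nat.cast_ne_zero.2 (hk0 p))
  have hm0 : (((Fintype.card E).factorial : ℕ) : ℚ) ≠ 0 :=
    Nat.cast_ne_zero.2 (Nat.factorial_ne_zero _)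
  have hcast : (Nat.card {σ : E ≃ Fin (Fintype.card E) //
        G.kruskal σ = T ∧ StrictMono (fun p : Fin T.card => σ ((τ p).1))} : ℚ)
      * ∏ p : Fin T.card, ((G.Ablock T τ p.1).card : ℚ)
      = (((Fintype.card E).factorial : ℕ) : ℚ) := by
    exact_mod_cast congrArg (Nat.cast : ℕ → ℚ) hcount
  rw [Finset.prod_inv_distrib]
  rw [Nat.card_eq_fintype_card] at hcast
  field_simp
  rw [Nat.card_eq_fintype_card]
  linear_combination hcast
end

section
/- The symmetric weight of a graph is unchanged by deleting its self-loops: if G' = G − L where L is the set of self-loop edges of G, then for every spanning tree T of G, w_s(G,T) = w_s(G',T). -/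
open scoped Classical
open MeasureTheory

set_option linter.unusedSectionVars false

namespace Multigraph

section LoopDeletion

variable {V E : Type} [Fintype E]
variable (G : Multigraph V E)

/-- The graph with self-loops deleted. -/
def noLoops : Multigraph V {e : E // ¬ (G.ends e).IsDiag} :=
  ⟨fun e => G.ends e.1⟩

/-- Select the non-self-loop edges of a list. -/
noncomputable def fsel (L : List E) : List {e : E // ¬ (G.ends e).IsDiag} :=
  L.filterMap fun e => if h : ¬ (G.ends e).IsDiag then some ⟨e, h⟩ else none

lemma fsel_nil : G.fsel [] = [] := rfl

lemma fsel_cons_pos (e : E) (h : ¬ (G.ends e).IsDiag) (L : List E) :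
    G.fsel (e :: L) = ⟨e, h⟩ :: G.fsel L := by
  simp only [fsel, List.filterMap_cons, dif_pos h]

lemma fsel_cons_neg (e : E) (h : (G.ends e).IsDiag) (L : List E) :
    G.fsel (e :: L) = G.fsel L := by
  simp only [fsel, List.filterMap_cons, dif_neg (not_not_intro h)]

lemma mem_fsel (e' : {e : E // ¬ (G.ends e).IsDiag}) (L : List E) :
    e' ∈ G.fsel L ↔ e'.1 ∈ L := by
  simp only [fsel, List.mem_filterMap]
  constructor
  · rintro ⟨a, ha, hsome⟩
    by_cases h : ¬ (G.ends a).IsDiag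
    · rw [dif_pos h] at hsome; cases hsome; exact ha
    · rw [dif_neg h] at hsome; cases hsome
  · intro h
    refine ⟨e'.1, h, ?_⟩
    rw [dif_pos e'.2]

lemma nodup_fsel {L : List E} (h : L.Nodup) : (G.fsel L).Nodup := by
  refine h.filterMap ?_
  intro a b c ha hb
  by_cases h1 : ¬ (G.ends a).IsDiag
  · rw [dif_pos h1] at ha
    by_cases h2 : ¬ (G.ends b).IsDiag
    · rw [dif_pos h2] at hb
      exact congrArg Subtype.val ((Option.some_injective _ ha).trans
        (Option.some_injective _ hb).symm)
    · rw [dif_neg h2] at hb; cases hb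
  · rw [dif_neg h1] at ha; cases ha

lemma connects_image (instE : DecidableEq E)
    (S' : Finset {e : E // ¬ (G.ends e).IsDiag}) (a b : V) :
    G.Connects (@Finset.image _ _ instE Subtype.val S') a b
      ↔ (G.noLoops).Connects S' a b := by
  constructor <;> refine fun h => Relation.ReflTransGen.mono ?_ a b h
  · rintro x y ⟨e, he, hxy⟩
    rw [Finset.mem_image] at he
    obtain ⟨e', he', rfl⟩ := he
    exact ⟨e', he', hxy⟩
  · rintro x y ⟨e', he', hxy⟩
    exact ⟨e'.1, Finset.mem_image_of_mem _ he', hxy⟩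

lemma isDiag_exists {z : Sym2 V} (h : z.IsDiag) : ∃ a, z = s(a, a) := by
  induction z using Sym2.ind with
  | _ x y =>
    rw [Sym2.mk_isDiag_iff] at h
    exact ⟨x, by rw [h]⟩

lemma foldl_image (instI instIm : DecidableEq E)
    (instE' : DecidableEq {e : E // ¬ (G.ends e).IsDiag})
    (L : List E) (S : Finset E) (S' : Finset {e : E // ¬ (G.ends e).IsDiag})
    (hS : S = @Finset.image _ _ instIm Subtype.val S') :
    L.foldl
      (fun S e => if ∀ a b, G.ends e = s(a, b) → ¬ G.Connects S a b then
        @insert _ _ (@Finset.instInsert _ instI) e S else S) S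
    = @Finset.image _ _ instIm Subtype.val
      ((G.fsel L).foldl
        (fun S e => if ∀ a b, (G.noLoops).ends e = s(a, b) → ¬ (G.noLoops).Connects S a b
          then @insert _ _ (@Finset.instInsert _ instE') e S else S) S') := by
  induction L generalizing S S' with
  | nil => rw [fsel_nil]; exact hS
  | cons e L ih =>
    subst hS
    by_cases h : ¬ (G.ends e).IsDiag
    · rw [fsel_cons_pos G e h]
      simp only [List.foldl_cons]
      have hcond : (∀ a b, G.ends e = s(a, b) →
            ¬ G.Connects (@Finset.image _ _ instIm Subtype.val S') a b)
          ↔ (∀ a b, (G.noLoops).ends ⟨e, h⟩ = s(a, b) → ¬ (G.noLoops).Connects S' a b) := by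
        constructor <;> intro H a b hab hc
        · exact H a b hab ((G.connects_image _ S' a b).mpr hc)
        · exact H a b hab ((G.connects_image _ S' a b).mp hc)
      by_cases hc : ∀ a b, G.ends e = s(a, b) →
          ¬ G.Connects (@Finset.image _ _ instIm Subtype.val S') a b
      · rw [if_pos hc, if_pos (hcond.mp hc)]
        refine ih _ _ ?_
        rw [Finset.image_insert]
        have hinst : instI = instIm := funext fun a => funext fun b => Subsingleton.elim _ _
        subst hinst
        rfl
      · rw [if_neg hc, if_neg (fun hc' => hc (hcond.mpr hc'))]
        exact ih _ _ rfl
    · rw [not_not] at h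
      rw [fsel_cons_neg G e h]
      simp only [List.foldl_cons]
      obtain ⟨a, ha⟩ := isDiag_exists h
      have hnc : ¬ ∀ a' b, G.ends e = s(a', b) →
          ¬ G.Connects (@Finset.image _ _ instIm Subtype.val S') a' b := by
        push_neg
        exact ⟨a, a, ha, Relation.ReflTransGen.refl⟩
      rw [if_neg hnc]
      exact ih _ _ rfl

end LoopDeletion

section LoopDeletion2

variable {V E : Type} [Fintype V] [Fintype E] [DecidableEq V] [DecidableEq E]
variable (G : Multigraph V E)

/-- The list of non-loop edges in the order given by `σ`. -/
noncomputable def fselList (σ : E ≃ Fin (Fintype.card E)) :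
    List {e : E // ¬ (G.ends e).IsDiag} :=
  G.fsel ((List.finRange (Fintype.card E)).map σ.symm)

lemma nodup_fselList (σ : E ≃ Fin (Fintype.card E)) : (G.fselList σ).Nodup :=
  G.nodup_fsel ((List.nodup_finRange _).map σ.symm.injective)

lemma mem_fselList (σ : E ≃ Fin (Fintype.card E)) (e' : {e : E // ¬ (G.ends e).IsDiag}) :
    e' ∈ G.fselList σ := by
  rw [fselList, mem_fsel]
  exact List.mem_map.mpr ⟨σ e'.1, List.mem_finRange _, σ.symm_apply_apply _⟩

lemma length_fselList (σ : E ≃ Fin (Fintype.card E)) :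
    (G.fselList σ).length = Fintype.card {e : E // ¬ (G.ends e).IsDiag} := by
  have h1 : (G.fselList σ).toFinset = Finset.univ :=
    Finset.eq_univ_iff_forall.mpr fun x => List.mem_toFinset.mpr (G.mem_fselList σ x)
  rw [← List.toFinset_card_of_nodup (G.nodup_fselList σ), h1, Finset.card_univ]

/-- The Hepp sector of the deloopped graph induced by a Hepp sector of `G`. -/
noncomputable def qmap (σ : E ≃ Fin (Fintype.card E)) :
    {e : E // ¬ (G.ends e).IsDiag} ≃ Fin (Fintype.card {e : E // ¬ (G.ends e).IsDiag}) :=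
  ((finCongr (G.length_fselList σ).symm).trans
    ((G.nodup_fselList σ).getEquivOfForallMemList _ (G.mem_fselList σ))).symm

lemma ofFn_get_cast {α : Type*} (l : List α) {n : ℕ} (h : l.length = n) :
    List.ofFn (fun i : Fin n => l.get (Fin.cast h.symm i)) = l := by
  subst h
  exact List.ofFn_get l

lemma qmap_spec (σ : E ≃ Fin (Fintype.card E)) :
    List.ofFn (G.qmap σ).symm = G.fselList σ :=
  ofFn_get_cast _ (G.length_fselList σ)

lemma qmap_unique {σ : E ≃ Fin (Fintype.card E)}
    {τ : {e : E // ¬ (G.ends e).IsDiag} ≃ Fin (Fintype.card {e : E // ¬ (G.ends e).IsDiag})}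
    (h : List.ofFn τ.symm = G.fselList σ) : τ = G.qmap σ := by
  have h2 : τ.symm = (G.qmap σ).symm :=
    Equiv.coe_inj.mp (List.ofFn_injective (h.trans (G.qmap_spec σ).symm))
  rw [← Equiv.symm_symm τ, h2, Equiv.symm_symm]

/-- Extend a permutation of the non-loop edges to all edges, fixing loops. -/
noncomputable def extPerm
    (h : {e : E // ¬ (G.ends e).IsDiag} ≃ {e : E // ¬ (G.ends e).IsDiag}) : E ≃ E where
  toFun e := if he : ¬ (G.ends e).IsDiag then (h ⟨e, he⟩).1 else e
  invFun e := if he : ¬ (G.ends e).IsDiag then (h.symm ⟨e, he⟩).1 else e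
  left_inv e := by
    by_cases he : ¬ (G.ends e).IsDiag
    · simp only [dif_pos he, dif_pos (h ⟨e, he⟩).2]
      exact congrArg Subtype.val (h.symm_apply_apply ⟨e, he⟩)
    · simp only [dif_neg he]
  right_inv e := by
    by_cases he : ¬ (G.ends e).IsDiag
    · simp only [dif_pos he, dif_pos (h.symm ⟨e, he⟩).2]
      exact congrArg Subtype.val (h.apply_symm_apply ⟨e, he⟩)
    · simp only [dif_neg he]

lemma extPerm_symm (h : {e : E // ¬ (G.ends e).IsDiag} ≃ {e : E // ¬ (G.ends e).IsDiag}) :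
    (G.extPerm h).symm = G.extPerm h.symm :=
  Equiv.ext fun _ => rfl

lemma fselList_trans (h : {e : E // ¬ (G.ends e).IsDiag} ≃ {e : E // ¬ (G.ends e).IsDiag})
    (σ : E ≃ Fin (Fintype.card E)) :
    G.fselList ((G.extPerm h).trans σ) = (G.fselList σ).map h.symm := by
  unfold fselList fsel
  have h1 : (List.finRange (Fintype.card E)).map ((G.extPerm h).trans σ).symm
      = ((List.finRange (Fintype.card E)).map σ.symm).map (G.extPerm h).symm := by
    rw [List.map_map]; rfl
  rw [h1, List.filterMap_map, List.map_filterMap]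
  congr 1
  funext e
  by_cases he : ¬ (G.ends e).IsDiag
  · have h2 : (G.extPerm h).symm e = (h.symm ⟨e, he⟩).1 := dif_pos he
    simp only [Function.comp, h2, dif_pos (h.symm ⟨e, he⟩).2, dif_pos he, Option.map_some]
  · have h2 : (G.extPerm h).symm e = e := dif_neg he
    simp only [Function.comp, h2, dif_neg he, Option.map_none]

lemma qmap_trans (h : {e : E // ¬ (G.ends e).IsDiag} ≃ {e : E // ¬ (G.ends e).IsDiag})
    (σ : E ≃ Fin (Fintype.card E)) :
    G.qmap ((G.extPerm h).trans σ) = h.trans (G.qmap σ) := by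
  symm
  apply qmap_unique
  rw [fselList_trans, ← G.qmap_spec σ, List.map_ofFn]
  rfl

lemma kruskal_eq_image (σ : E ≃ Fin (Fintype.card E)) :
    G.kruskal σ = ((G.noLoops).kruskal (G.qmap σ)).image Subtype.val := by
  unfold kruskal
  have h1 : (List.finRange (Fintype.card {e : E // ¬ (G.ends e).IsDiag})).map (G.qmap σ).symm
      = G.fselList σ := by
    rw [← List.ofFn_eq_map]; exact G.qmap_spec σ
  rw [h1]
  exact G.foldl_image _ _ _ _ ∅ ∅ (by simp)

lemma kruskal_iff {T : Finset E} {T' : Finset {e : E // ¬ (G.ends e).IsDiag}}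
    (hT' : T = T'.image Subtype.val) (σ : E ≃ Fin (Fintype.card E)) :
    G.kruskal σ = T ↔ (G.noLoops).kruskal (G.qmap σ) = T' := by
  rw [kruskal_eq_image, hT']
  exact ⟨fun h => Finset.image_injective Subtype.val_injective h, fun h => by rw [h]⟩

lemma fiber_card (τ₁ τ₂ :
    {e : E // ¬ (G.ends e).IsDiag} ≃ Fin (Fintype.card {e : E // ¬ (G.ends e).IsDiag})) :
    (Finset.univ.filter fun σ : E ≃ Fin (Fintype.card E) => G.qmap σ = τ₁).card
    = (Finset.univ.filter fun σ : E ≃ Fin (Fintype.card E) => G.qmap σ = τ₂).card := by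
  have key : ∀ (a b : {e : E // ¬ (G.ends e).IsDiag} ≃ Fin (Fintype.card {e : E // ¬ (G.ends e).IsDiag})) (σ : E ≃ Fin (Fintype.card E)), G.qmap σ = a →
      G.qmap ((G.extPerm (b.trans a.symm)).trans σ) = b := by
    intro a b σ hσ
    rw [qmap_trans, hσ]
    ext x
    simp
  have inv : ∀ (a b : {e : E // ¬ (G.ends e).IsDiag} ≃ Fin (Fintype.card {e : E // ¬ (G.ends e).IsDiag})) (σ : E ≃ Fin (Fintype.card E)),
      (G.extPerm (a.trans b.symm)).trans ((G.extPerm (b.trans a.symm)).trans σ) = σ := by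
    intro a b σ
    rw [← Equiv.trans_assoc]
    have h1 : a.trans b.symm = (b.trans a.symm).symm := by ext x; simp
    rw [h1, ← extPerm_symm, Equiv.symm_trans_self, Equiv.refl_trans]
  refine Finset.card_bij' (fun σ _ => (G.extPerm (τ₂.trans τ₁.symm)).trans σ)
    (fun σ _ => (G.extPerm (τ₁.trans τ₂.symm)).trans σ) ?_ ?_ ?_ ?_
  · intro σ hσ
    rw [Finset.mem_filter] at hσ ⊢
    exact ⟨Finset.mem_univ _, key τ₁ τ₂ σ hσ.2⟩
  · intro σ hσ
    rw [Finset.mem_filter] at hσ ⊢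
    exact ⟨Finset.mem_univ _, key τ₂ τ₁ σ hσ.2⟩
  · intro σ _; exact inv τ₁ τ₂ σ
  · intro σ _; exact inv τ₂ τ₁ σ

lemma card_subtype_any {α : Type} [Fintype α] (p : α → Prop) [DecidablePred p]
    (i : Fintype {x // p x}) :
    @Fintype.card _ i = (Finset.univ.filter p).card := by
  have h : i = Subtype.fintype p := Subsingleton.elim _ _
  rw [h]
  convert Fintype.card_subtype p

end LoopDeletion2

end Multigraph

/-- the symmetric weight is unchanged by deleting the
self-loops of `G`: if `G'` is `G` with the self-loop edges removed (its edge
type being the subtype of non-self-loop edges) and `T'` is the copy of the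
spanning tree `T` in `G'`, then `w_s(G,T) = w_s(G',T')`. -/
theorem ws_delete_self_loops
    {V E : Type} [Fintype V] [Fintype E] [DecidableEq V] [DecidableEq E]
    (G : Multigraph V E) (T : Finset E) (hT : G.IsSpanningTree T)
    (T' : Finset {e : E // ¬ (G.ends e).IsDiag})
    (hT' : T = T'.image Subtype.val) :
    G.ws T =
      (Multigraph.mk fun e : {e : E // ¬ (G.ends e).IsDiag} => G.ends e.1).ws T' := by
  show G.ws T = (G.noLoops).ws T'
  have hiff : ∀ σ : E ≃ Fin (Fintype.card E),
      G.kruskal σ = T ↔ (G.noLoops).kruskal (G.qmap σ) = T' :=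
    fun σ => G.kruskal_iff hT' σ
  set m' := Fintype.card {e : E // ¬ (G.ends e).IsDiag} with hm'
  set B := Finset.univ.filter
    (fun τ : {e : E // ¬ (G.ends e).IsDiag} ≃ Fin m' => (G.noLoops).kruskal τ = T') with hB
  set c := (Finset.univ.filter
    (fun σ : E ≃ Fin (Fintype.card E) =>
      G.qmap σ = (Fintype.equivFin {e : E // ¬ (G.ends e).IsDiag}))).card with hc
  have hfib : ∀ τ, (Finset.univ.filter
      fun σ : E ≃ Fin (Fintype.card E) => G.qmap σ = τ).card = c :=
    fun τ => G.fiber_card τ _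
  have hA : (Finset.univ.filter fun σ : E ≃ Fin (Fintype.card E) => G.kruskal σ = T).card
      = B.card * c := by
    rw [Finset.card_eq_sum_card_fiberwise (f := G.qmap) (t := B)
      (fun σ hσ => by
        rw [Finset.mem_coe, Finset.mem_filter] at hσ ⊢
        exact ⟨Finset.mem_univ _, (hiff σ).mp hσ.2⟩)]
    rw [Finset.sum_congr rfl (fun τ hτ => ?_), Finset.sum_const, smul_eq_mul]
    rw [hB, Finset.mem_filter] at hτ
    have hfil : (Finset.univ.filter
          fun σ : E ≃ Fin (Fintype.card E) => G.kruskal σ = T).filter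
        (fun σ => G.qmap σ = τ)
        = Finset.univ.filter fun σ => G.qmap σ = τ := by
      ext σ
      simp only [Finset.mem_filter, Finset.mem_univ, true_and]
      constructor
      · rintro ⟨_, h2⟩; exact h2
      · intro h2; exact ⟨(hiff σ).mpr (h2 ▸ hτ.2), h2⟩
    rw [hfil, hfib]
  have htot : Nat.factorial (Fintype.card E) = Nat.factorial m' * c := by
    have h1 : (Finset.univ : Finset (E ≃ Fin (Fintype.card E))).card
        = ∑ τ ∈ (Finset.univ :
            Finset ({e : E // ¬ (G.ends e).IsDiag} ≃ Fin m')),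
          (Finset.univ.filter fun σ : E ≃ Fin (Fintype.card E) => G.qmap σ = τ).card :=
      Finset.card_eq_sum_card_fiberwise (fun σ _ => Finset.mem_univ _)
    rw [Finset.sum_congr rfl (fun τ _ => hfib τ), Finset.sum_const, smul_eq_mul,
      Finset.card_univ, Finset.card_univ, Fintype.card_equiv (Fintype.equivFin E),
      Fintype.card_equiv (Fintype.equivFin _)] at h1
    exact h1
  have hcn : c ≠ 0 := by
    intro h
    rw [h, Nat.mul_zero] at htot
    exact Nat.factorial_ne_zero _ htot
  have hc0 : (c : ℚ) ≠ 0 := Nat.cast_ne_zero.mpr hcn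
  unfold Multigraph.ws
  rw [Multigraph.card_subtype_any (fun σ : E ≃ Fin (Fintype.card E) => G.kruskal σ = T) _,
    Multigraph.card_subtype_any
      (fun τ : {e : E // ¬ (G.ends e).IsDiag} ≃ Fin m' => (G.noLoops).kruskal τ = T') _]
  rw [hA, ← hB, htot]
  push_cast
  exact mul_div_mul_right _ _ hc0
end
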